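/- arXiv:1601.02890 — 4 statements merged into one kernel-verified Lean document; each statement's English description precedes it below -/
import Mathlib

section
/- For every integer n ≥ 1, r2(n) = 4(d₁(n) − d₃(n)), where d₁(n) and d₃(n) count the divisors of n congruent to 1 and 3 modulo 4 respectively. -/
open Zsqrtd

namespace Jacobi2

local notation "ℤi" => GaussianInt

/-- natural norm -/
def Nn (z : ℤi) : ℕ := z.norm.natAbs

lemma Nn_mul (x y : ℤi) : Nn (x * y) = Nn x * Nn y := by
  simp [Nn, Zsqrtd.norm_mul, Int.natAbs_mul]

@[simp] lemma Nn_one : Nn 1 = 1 := rfl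

@[simp] lemma Nn_zero : Nn 0 = 0 := rfl

lemma Nn_eq_zero {z : ℤi} : Nn z = 0 ↔ z = 0 := by
  simp [Nn, Int.natAbs_eq_zero]

lemma Nn_unit {z : ℤi} : IsUnit z ↔ Nn z = 1 := Zsqrtd.norm_eq_one_iff.symm

lemma Nn_eq_iff {z : ℤi} {n : ℕ} : Nn z = n ↔ z.norm = (n : ℤ) := by
  constructor
  · rintro rfl; exact (GaussianInt.abs_natCast_norm z).symm
  · intro h; simp [Nn, h]

lemma Nn_dvd {x y : ℤi} (h : x ∣ y) : Nn x ∣ Nn y := by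
  obtain ⟨c, rfl⟩ := h; exact ⟨Nn c, Nn_mul _ _⟩

lemma Nn_assoc {x y : ℤi} (h : Associated x y) : Nn x = Nn y := by
  obtain ⟨u, rfl⟩ := h
  rw [Nn_mul, Nn_unit.mp u.isUnit, mul_one]

lemma Nn_natCast (p : ℕ) : Nn (p : ℤi) = p * p := by
  simp [Nn, Zsqrtd.norm_natCast, Int.natAbs_mul]

lemma Nn_pow (x : ℤi) (k : ℕ) : Nn (x ^ k) = Nn x ^ k := by
  induction k with
  | zero => simp
  | succ k ih => rw [pow_succ, Nn_mul, ih, pow_succ]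

lemma Nn_star (z : ℤi) : Nn (star z) = Nn z := by
  simp [Nn, Zsqrtd.norm_conj]

lemma prime_of_nn_prime {q : ℤi} (h : (Nn q).Prime) : Prime q := by
  have hirr : Irreducible q := by
    constructor
    · intro hu
      rw [Nn_unit.mp hu] at h
      exact h.one_lt.ne' rfl
    · intro a b hab
      have hq : Nn q = Nn a * Nn b := by rw [hab, Nn_mul]
      rw [hq] at h
      rcases Nat.prime_mul_iff.mp h with ⟨_, hb⟩ | ⟨_, ha⟩
      · right; exact Nn_unit.mpr hb
      · left; exact Nn_unit.mpr ha
  exact hirr.prime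

lemma star_dvd {x y : ℤi} (h : x ∣ y) : star x ∣ star y := by
  obtain ⟨c, rfl⟩ := h; exact ⟨star c, by rw [star_mul']⟩

lemma prime_star {q : ℤi} (hq : Prime q) : Prime (star q) := by
  refine ⟨?_, ?_, ?_⟩
  · simpa using hq.ne_zero
  · intro hu
    have : Nn q = 1 := by rw [← Nn_star]; exact Nn_unit.mp hu
    exact hq.not_unit (Nn_unit.mpr this)
  · intro a b hab
    have : q ∣ star a * star b := by
      have := star_dvd hab
      rwa [star_star, star_mul'] at this
    rcases hq.2.2 _ _ this with h | h
    · left; have := star_dvd h; rwa [star_star] at this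
    · right; have := star_dvd h; rwa [star_star] at this

lemma cast_Nn (z : ℤi) : ((Nn z : ℕ) : ℤi) = z * star z := by
  show ((z.norm.natAbs : ℕ) : ℤi) = z * star z
  rw [GaussianInt.natCast_natAbs_norm]
  exact Zsqrtd.norm_eq_mul_conj z

lemma prime_dvd_of_dvd_nn {q z : ℤi} (hq : Prime q) {t : ℕ} (ht : t ∣ Nn z)
    (h : q ∣ (t : ℤi)) : q ∣ z ∨ star q ∣ z := by
  have h2 : q ∣ z * star z := by
    rw [← cast_Nn]
    exact h.trans (Nat.cast_dvd_cast ht)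
  rcases hq.2.2 _ _ h2 with h | h
  · exact Or.inl h
  · right
    have := star_dvd h
    rwa [star_star] at this

lemma isUnit_cases {u : ℤi} (h : IsUnit u) :
    u = 1 ∨ u = -1 ∨ u = ⟨0, 1⟩ ∨ u = ⟨0, -1⟩ := by
  have h1 : u.re.natAbs * u.re.natAbs + u.im.natAbs * u.im.natAbs = 1 := by
    rw [← GaussianInt.natAbs_norm_eq]; exact Nn_unit.mp h
  have hre : u.re.natAbs ≤ 1 := by nlinarith
  have him : u.im.natAbs ≤ 1 := by nlinarith
  interval_cases hr : u.re.natAbs <;> interval_cases hi : u.im.natAbs <;>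
    try norm_num at h1
  all_goals
    rcases Int.natAbs_eq_iff.mp hr with h2 | h2 <;>
    rcases Int.natAbs_eq_iff.mp hi with h3 | h3 <;>
    simp_all [Zsqrtd.ext_iff]


lemma isCoprime_of_coprime_nn {x y : ℤi} (h : Nat.Coprime (Nn x) (Nn y))
    (hx : x ≠ 0) : IsCoprime x y := by
  apply EuclideanDomain.isCoprime_of_dvd
  · exact fun ⟨h1, _⟩ => hx h1
  · intro d hd _ hdx hdy
    apply hd
    have h1 : Nn d ∣ Nat.gcd (Nn x) (Nn y) := Nat.dvd_gcd (Nn_dvd hdx) (Nn_dvd hdy)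
    rw [h] at h1
    exact Nn_unit.mpr (Nat.eq_one_of_dvd_one h1)

lemma split_unique {m n : ℕ} (hmn : Nat.Coprime m n) (hm : 0 < m)
    {x y x' y' : ℤi} (h : x * y = x' * y') (hx : Nn x = m) (hy : Nn y = n)
    (hx' : Nn x' = m) (hy' : Nn y' = n) : Associated x x' := by
  have hx0 : x ≠ 0 := fun h0 => by rw [h0, Nn_zero] at hx; omega
  have hx0' : x' ≠ 0 := fun h0 => by rw [h0, Nn_zero] at hx'; omega
  have h1 : IsCoprime x y' := isCoprime_of_coprime_nn (by rw [hx, hy']; exact hmn) hx0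
  have h2 : IsCoprime x' y := isCoprime_of_coprime_nn (by rw [hx', hy]; exact hmn) hx0'
  have d1 : x ∣ x' * y' := h ▸ Dvd.intro y rfl
  have d2 : x' ∣ x * y := h ▸ Dvd.intro y' rfl
  exact associated_of_dvd_dvd (h1.dvd_of_dvd_mul_right d1) (h2.dvd_of_dvd_mul_right d2)

lemma split_exists : ∀ m : ℕ, ∀ {n : ℕ}, Nat.Coprime m n → ∀ {z : ℤi}, Nn z = m * n →
    ∃ x y : ℤi, z = x * y ∧ Nn x = m ∧ Nn y = n := by
  intro m
  induction m using Nat.strong_induction_on with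
  | _ m ih =>
    intro n hmn z hz
    rcases eq_or_ne m 1 with rfl | hm1
    · exact ⟨1, z, by simp, Nn_one, by simpa using hz⟩
    rcases eq_or_ne m 0 with rfl | hm0
    · have hn : n = 1 := Nat.coprime_zero_left n |>.mp hmn
      exact ⟨z, 1, by simp, by simpa using hz, by simp [hn]⟩
    set p := m.minFac with hpdef
    have hpp : p.Prime := Nat.minFac_prime hm1
    have hpm : p ∣ m := Nat.minFac_dvd m
    have hpn : ¬ p ∣ n := fun hd => hpp.one_lt.ne'
      (Nat.eq_one_of_dvd_one (hmn ▸ Nat.dvd_gcd hpm hd))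
    have hpz : p ∣ Nn z := hz ▸ Dvd.dvd.mul_right hpm n
    have hpu : ¬IsUnit ((p : ℕ) : ℤi) := by
      rw [Nn_unit, Nn_natCast]
      nlinarith [hpp.two_le]
    have hp0 : ((p : ℕ) : ℤi) ≠ 0 := by
      intro h0
      have h1 := Nn_natCast p
      rw [h0, Nn_zero] at h1
      exact hpp.ne_zero (mul_self_eq_zero.mp h1.symm)
    obtain ⟨q0, hq0irr, hq0p⟩ := WfDvdMonoid.exists_irreducible_factor hpu hp0
    -- get a prime divisor of z dividing p
    obtain ⟨q, hq, hqz, hqp⟩ : ∃ q : ℤi, Prime q ∧ q ∣ z ∧ q ∣ ((p : ℕ) : ℤi) := by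
      rcases prime_dvd_of_dvd_nn hq0irr.prime hpz hq0p with h | h
      · exact ⟨q0, hq0irr.prime, h, hq0p⟩
      · refine ⟨star q0, prime_star hq0irr.prime, h, ?_⟩
        have := star_dvd hq0p
        rwa [star_natCast] at this
    have hNq : Nn q ∣ p ^ 2 := by
      have := Nn_dvd hqp
      rwa [Nn_natCast, ← pow_two] at this
    obtain ⟨j, hj2, hjq⟩ := (Nat.dvd_prime_pow hpp).mp hNq
    have hq1 : Nn q ≠ 1 := fun h1 => hq.not_unit (Nn_unit.mpr h1)
    match j, hj2, hjq with
    | 0, _, hjq => simp at hjq; exact absurd hjq hq1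
    | (j+3), hj2, _ => omega
    | 1, _, hjq =>
      -- Nn q = p
      obtain ⟨z1, rfl⟩ := hqz
      rw [pow_one] at hjq
      obtain ⟨m', hm'⟩ := hpm
      have hm'z : Nn z1 = m' * n := by
        have h2 : Nn q * Nn z1 = m * n := by rw [← Nn_mul]; exact hz
        rw [hjq] at h2
        have h1 : p * Nn z1 = p * (m' * n) := by rw [h2, hm']; ring
        exact Nat.eq_of_mul_eq_mul_left hpp.pos h1
      have hm'0 : m' ≠ 0 := fun h0 => hm0 (by simp [hm', h0])
      have hlt : m' < m := by
        rw [hm']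
        exact (lt_mul_iff_one_lt_left (Nat.pos_of_ne_zero hm'0)).mpr hpp.one_lt
      obtain ⟨x, y, rfl, hxn, hyn⟩ :=
        ih m' hlt (Nat.Coprime.coprime_dvd_left ⟨p, by rw [hm']; ring⟩ hmn) hm'z
      exact ⟨q * x, y, by ring, by rw [Nn_mul, hjq, hxn, hm'], hyn⟩
    | 2, _, hjq =>
      -- Nn q = p^2 : q is associated to p, so p ∣ z
      have hassoc : Associated q ((p : ℕ) : ℤi) := by
        obtain ⟨t, ht⟩ := hqp
        have hNt : Nn q * Nn t = Nn q * 1 := by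
          rw [← Nn_mul, ← ht, Nn_natCast, hjq, mul_one]; ring
        have : Nn t = 1 := Nat.eq_of_mul_eq_mul_left (by rw [hjq]; exact pow_pos hpp.pos 2) hNt
        exact ⟨(Nn_unit.mpr this).unit, by rw [IsUnit.unit_spec, ← ht]⟩
      have hpz2 : ((p : ℕ) : ℤi) ∣ z := (hassoc.symm.dvd).trans hqz
      obtain ⟨z1, rfl⟩ := hpz2
      have hp2mn : p ^ 2 ∣ m * n := by
        rw [← hz, Nn_mul, Nn_natCast, ← pow_two]
        exact Dvd.intro (Nn z1) rfl
      have hp2m : p ^ 2 ∣ m :=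
        (Nat.Coprime.pow_left 2 (hpp.coprime_iff_not_dvd.mpr hpn)).dvd_of_dvd_mul_right hp2mn
      obtain ⟨m', hm'⟩ := hp2m
      have hmz1 : Nn z1 = m' * n := by
        have h2 : p * p * Nn z1 = m * n := by
          rw [← Nn_natCast, ← Nn_mul]; exact hz
        have h1 : p ^ 2 * Nn z1 = p ^ 2 * (m' * n) := by
          rw [pow_two, h2, hm']; ring
        exact Nat.eq_of_mul_eq_mul_left (pow_pos hpp.pos 2) h1
      have hlt : m' < m := by
        have hm'0 : m' ≠ 0 := fun h0 => hm0 (by simp [hm', h0])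
        have h12 : 1 < p ^ 2 := by
          have h2 := hpp.two_le
          rw [pow_two]
          calc 1 < 2 * 2 := by omega
          _ ≤ p * p := Nat.mul_le_mul h2 h2
        rw [hm']
        exact (lt_mul_iff_one_lt_left (Nat.pos_of_ne_zero hm'0)).mpr h12
      obtain ⟨x, y, rfl, hxn, hyn⟩ :=
        ih m' hlt (Nat.Coprime.coprime_dvd_left ⟨p ^ 2, by rw [hm']; ring⟩ hmn) hmz1
      refine ⟨((p : ℕ) : ℤi) * x, y, by ring, ?_, hyn⟩
      rw [Nn_mul, Nn_natCast, hxn, hm', pow_two]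


/-- norm on associates -/
def NA : Associates GaussianInt → ℕ := Quotient.lift Nn fun _ _ h => Nn_assoc h

@[simp] lemma NA_mk (z : ℤi) : NA (Associates.mk z) = Nn z := rfl

lemma NA_mul (a b : Associates GaussianInt) : NA (a * b) = NA a * NA b := by
  obtain ⟨x, rfl⟩ := Associates.mk_surjective a
  obtain ⟨y, rfl⟩ := Associates.mk_surjective b
  rw [Associates.mk_mul_mk, NA_mk, NA_mk, NA_mk, Nn_mul]

/-- the number of associate classes of a given norm -/
noncomputable def Cc (n : ℕ) : ℕ := Nat.card {a : Associates GaussianInt // NA a = n}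

lemma card_units_eq : Nat.card {z : ℤi // Nn z = 1} = 4 := by
  have hset : {z : ℤi | Nn z = 1} =
      (({1, -1, ⟨0, 1⟩, ⟨0, -1⟩} : Finset ℤi) : Set ℤi) := by
    ext z
    simp only [Set.mem_setOf_eq, Finset.coe_insert, Set.mem_insert_iff,
      Finset.coe_singleton, Set.mem_singleton_iff]
    constructor
    · intro h
      exact isUnit_cases (Nn_unit.mpr h)
    · rintro (rfl | rfl | rfl | rfl) <;> rfl
  have h1 : Nat.card {z : ℤi // Nn z = 1} = Nat.card {z : ℤi | Nn z = 1} :=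
    Nat.card_congr (Equiv.subtypeEquivRight fun z => by simp [Set.mem_setOf_eq])
  rw [h1, Nat.card_coe_set_eq, hset, Set.ncard_coe_finset]
  decide

lemma card_norm {n : ℕ} (hn : 0 < n) :
    Nat.card {z : ℤi // Nn z = n} = 4 * Cc n := by
  have key : Function.Bijective
      (fun x : {a : Associates GaussianInt // NA a = n} × {u : ℤi // Nn u = 1} =>
        (⟨x.2.1 * Quot.out x.1.1, by
          have h1 : NA (Associates.mk (Quot.out x.1.1)) = n := by
            rw [Associates.quot_out]; exact x.1.2
          rw [Nn_mul, x.2.2, one_mul]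
          exact h1⟩ : {z : ℤi // Nn z = n})) := by
    constructor
    · rintro ⟨⟨a, ha⟩, ⟨u, hu⟩⟩ ⟨⟨b, hb⟩, ⟨v, hv⟩⟩ h
      have h0 : u * Quot.out a = v * Quot.out b := congrArg Subtype.val h
      have hab : a = b := by
        have h1 : Associated (Quot.out a) (Quot.out b) := by
          have hu' : IsUnit u := Nn_unit.mpr hu
          have hv' : IsUnit v := Nn_unit.mpr hv
          have hvne : v ≠ 0 := fun h2 => by rw [h2, Nn_zero] at hv; omega
          obtain ⟨uu, huu⟩ := hu'
          obtain ⟨vv, hvv⟩ := hv'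
          refine ⟨uu * vv⁻¹, ?_⟩
          apply mul_left_cancel₀ hvne
          calc v * (Quot.out a * ↑(uu * vv⁻¹))
              = (↑uu * Quot.out a) * (v * ↑vv⁻¹) := by rw [Units.val_mul]; ring
            _ = (u * Quot.out a) * (↑vv * ↑vv⁻¹) := by rw [huu, hvv]
            _ = v * Quot.out b := by rw [Units.mul_inv, mul_one, h0]
        rw [← Associates.quot_out a, ← Associates.quot_out b,
          Associates.mk_eq_mk_iff_associated]
        exact h1
      subst hab
      have hout : Quot.out a ≠ 0 := by
        intro h2
        have h3 : NA (Associates.mk (Quot.out a)) = n := by rw [Associates.quot_out]; exact ha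
        rw [h2] at h3
        rw [NA_mk, Nn_zero] at h3
        omega
      have huv : u = v := by
        have := mul_right_cancel₀ hout h0
        exact this
      simp [huv]
    · rintro ⟨z, hz⟩
      have hassoc : Associated (Quot.out (Associates.mk z)) z := Associates.mk_quot_out z
      obtain ⟨w, hw⟩ := hassoc
      refine ⟨⟨⟨Associates.mk z, by simpa using hz⟩, ⟨(w : ℤi), Nn_unit.mp w.isUnit⟩⟩, ?_⟩
      apply Subtype.ext
      show (w : ℤi) * Quot.out (Associates.mk z) = z
      rw [mul_comm]; exact hw
  have := Nat.card_congr (Equiv.ofBijective _ key)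
  rw [← this, Nat.card_prod, card_units_eq, mul_comm, Cc]


lemma Cc_one : Cc 1 = 1 := by
  have : Unique {a : Associates GaussianInt // NA a = 1} := by
    refine ⟨⟨⟨Associates.mk 1, by rw [NA_mk, Nn_one]⟩⟩, ?_⟩
    rintro ⟨a, ha⟩
    obtain ⟨z, rfl⟩ := Associates.mk_surjective a
    apply Subtype.ext
    show Associates.mk z = Associates.mk 1
    rw [NA_mk] at ha
    rw [Associates.mk_one, Associates.mk_eq_one]
    exact Nn_unit.mpr ha
  exact Nat.card_unique

lemma Cc_mul {m n : ℕ} (hm : 0 < m) (hn : 0 < n) (hmn : Nat.Coprime m n) :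
    Cc (m * n) = Cc m * Cc n := by
  have key : Function.Bijective
      (fun x : {b : Associates GaussianInt // NA b = m} × {c : Associates GaussianInt // NA c = n} =>
        (⟨x.1.1 * x.2.1, by rw [NA_mul, x.1.2, x.2.2]⟩ :
          {a : Associates GaussianInt // NA a = m * n})) := by
    constructor
    · rintro ⟨⟨b, hb⟩, ⟨c, hc⟩⟩ ⟨⟨b', hb'⟩, ⟨c', hc'⟩⟩ h
      have h0 : b * c = b' * c' := congrArg Subtype.val h
      obtain ⟨x, rfl⟩ := Associates.mk_surjective b
      obtain ⟨y, rfl⟩ := Associates.mk_surjective c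
      obtain ⟨x', rfl⟩ := Associates.mk_surjective b'
      obtain ⟨y', rfl⟩ := Associates.mk_surjective c'
      rw [NA_mk] at hb hc hb' hc'
      rw [Associates.mk_mul_mk, Associates.mk_mul_mk,
        Associates.mk_eq_mk_iff_associated] at h0
      obtain ⟨u, hu⟩ := h0.symm
      -- x' * y' * u = x * y  i.e.  x * y = x' * (y' * u)
      have h2 : x * y = x' * (y' * ↑u) := by rw [← hu]; ring
      have hyu : Nn (y' * ↑u) = n := by rw [Nn_mul, Nn_unit.mp u.isUnit, mul_one, hc']
      have hbx : Associated x x' := split_unique hmn hm h2 hb hc hb' hyu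
      have h3 : y * x = (y' * ↑u) * x' := by linear_combination h2
      have hcy : Associated y (y' * ↑u) := split_unique hmn.symm hn h3 hc hb hyu hb'
      have hcy' : Associated y y' := hcy.trans (Associated.symm ⟨u, rfl⟩)
      have e1 : Associates.mk x = Associates.mk x' :=
        Associates.mk_eq_mk_iff_associated.mpr hbx
      have e2 : Associates.mk y = Associates.mk y' :=
        Associates.mk_eq_mk_iff_associated.mpr hcy'
      simp only [Prod.mk.injEq, Subtype.mk.injEq]
      exact ⟨e1, e2⟩
    · rintro ⟨a, ha⟩
      obtain ⟨z, rfl⟩ := Associates.mk_surjective a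
      rw [NA_mk] at ha
      obtain ⟨x, y, rfl, hx, hy⟩ := split_exists m hmn ha
      exact ⟨⟨⟨Associates.mk x, by simpa using hx⟩, ⟨Associates.mk y, by simpa using hy⟩⟩,
        Subtype.ext (Associates.mk_mul_mk)⟩
  have := Nat.card_congr (Equiv.ofBijective _ key)
  rw [Cc, ← this, Nat.card_prod, Cc, Cc]


lemma unit_of_norm_pow_zero {z : ℤi} (hz : Nn z = 1) : Associated 1 z :=
  (associated_one_iff_isUnit.mpr (Nn_unit.mpr hz)).symm

lemma rep_three {p : ℕ} (hp : p.Prime) (hp3 : p % 4 = 3) :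
    ∀ k : ℕ, ∀ z : ℤi, Nn z = p ^ k → ∃ j, k = 2 * j ∧ Associated (((p : ℕ) : ℤi) ^ j) z := by
  haveI : Fact p.Prime := ⟨hp⟩
  have hprime : Prime ((p : ℕ) : ℤi) :=
    GaussianInt.prime_of_nat_prime_of_mod_four_eq_three p hp3
  intro k
  induction k using Nat.strong_induction_on with
  | _ k ih =>
    intro z hz
    match k, hz with
    | 0, hz => exact ⟨0, rfl, by simpa using unit_of_norm_pow_zero (by simpa using hz)⟩
    | 1, hz =>
      exfalso
      have hd : ((p : ℕ) : ℤi) ∣ z := by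
        rcases prime_dvd_of_dvd_nn hprime (t := p) (by rw [hz]; simp) dvd_rfl with h | h
        · exact h
        · rwa [star_natCast] at h
      have := Nn_dvd hd
      rw [Nn_natCast, hz, pow_one] at this
      have h2 := Nat.le_of_dvd hp.pos this
      nlinarith [hp.two_le]
    | (k+2), hz =>
      have hd : ((p : ℕ) : ℤi) ∣ z := by
        rcases prime_dvd_of_dvd_nn hprime (t := p)
            (by rw [hz]; exact dvd_pow_self p (by omega)) dvd_rfl with h | h
        · exact h
        · rwa [star_natCast] at h
      obtain ⟨z', rfl⟩ := hd
      have hnz' : Nn z' = p ^ k := by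
        have h0 : Nn (((p : ℕ) : ℤi) * z') = p * p * Nn z' := by
          rw [Nn_mul, Nn_natCast]
        have h1 : p * p * Nn z' = p * p * p ^ k := by
          rw [← h0, hz]; ring
        exact Nat.eq_of_mul_eq_mul_left (Nat.mul_pos hp.pos hp.pos) h1
      obtain ⟨j, hj, hassoc⟩ := ih k (by omega) z' hnz'
      refine ⟨j + 1, by omega, ?_⟩
      have h2 : Associated (((p : ℕ) : ℤi) * ((p : ℕ) : ℤi) ^ j) (((p : ℕ) : ℤi) * z') :=
        Associated.mul_left _ hassoc
      rwa [← pow_succ'] at h2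

lemma card_three {p : ℕ} (hp : p.Prime) (hp3 : p % 4 = 3) (k : ℕ) :
    Cc (p ^ k) = if 2 ∣ k then 1 else 0 := by
  haveI : Fact p.Prime := ⟨hp⟩
  by_cases hk : 2 ∣ k
  · obtain ⟨j, rfl⟩ := hk
    rw [if_pos ⟨j, rfl⟩]
    have hcan : Nn (((p : ℕ) : ℤi) ^ j) = p ^ (2 * j) := by
      rw [Nn_pow, Nn_natCast, ← pow_two, ← pow_mul]
    have : Unique {a : Associates GaussianInt // NA a = p ^ (2 * j)} := by
      refine ⟨⟨⟨Associates.mk (((p : ℕ) : ℤi) ^ j), by rw [NA_mk, hcan]⟩⟩, ?_⟩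
      rintro ⟨a, ha⟩
      obtain ⟨z, rfl⟩ := Associates.mk_surjective a
      rw [NA_mk] at ha
      obtain ⟨j', hj', hassoc⟩ := rep_three hp hp3 _ z ha
      have hj2 : j' = j := by omega
      subst hj2
      exact Subtype.ext (Associates.mk_eq_mk_iff_associated.mpr hassoc).symm
    exact Nat.card_unique
  · rw [if_neg hk]
    have : IsEmpty {a : Associates GaussianInt // NA a = p ^ k} := by
      constructor
      rintro ⟨a, ha⟩
      obtain ⟨z, rfl⟩ := Associates.mk_surjective a
      rw [NA_mk] at ha
      obtain ⟨j', hj', _⟩ := rep_three hp hp3 _ z ha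
      exact hk ⟨j', hj'⟩
    simp [Cc]

def piTwo : GaussianInt := ⟨1, 1⟩

lemma Nn_piTwo : Nn piTwo = 2 := rfl

lemma prime_piTwo : Prime piTwo := prime_of_nn_prime (by rw [Nn_piTwo]; exact Nat.prime_two)

lemma piTwo_mul_star : piTwo * star piTwo = ((2 : ℕ) : ℤi) := by
  rw [← cast_Nn, Nn_piTwo]

lemma star_piTwo_assoc : Associated piTwo (star piTwo) := by
  refine ⟨(Nn_unit.mpr (rfl : Nn ⟨0, -1⟩ = 1)).unit, ?_⟩
  rw [IsUnit.unit_spec]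
  decide

lemma rep_two : ∀ k : ℕ, ∀ z : ℤi, Nn z = 2 ^ k → Associated (piTwo ^ k) z := by
  intro k
  induction k with
  | zero => intro z hz; simpa using unit_of_norm_pow_zero (by simpa using hz)
  | succ k ih =>
    intro z hz
    have hd : piTwo ∣ z := by
      have hdvd : piTwo ∣ ((2 : ℕ) : ℤi) := ⟨star piTwo, piTwo_mul_star.symm⟩
      rcases prime_dvd_of_dvd_nn prime_piTwo (t := 2)
          (by rw [hz]; exact dvd_pow_self 2 (by omega)) hdvd with h | h
      · exact h
      · exact star_piTwo_assoc.dvd.trans h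
    obtain ⟨z', rfl⟩ := hd
    have hnz' : Nn z' = 2 ^ k := by
      have h0 : Nn (piTwo * z') = 2 * Nn z' := by rw [Nn_mul, Nn_piTwo]
      have h1 : 2 * Nn z' = 2 * 2 ^ k := by rw [← h0, hz]; ring
      omega
    have h2 : Associated (piTwo * piTwo ^ k) (piTwo * z') := Associated.mul_left _ (ih z' hnz')
    rwa [← pow_succ'] at h2

lemma card_two (k : ℕ) : Cc (2 ^ k) = 1 := by
  have hcan : Nn (piTwo ^ k) = 2 ^ k := by rw [Nn_pow, Nn_piTwo]
  have : Unique {a : Associates GaussianInt // NA a = 2 ^ k} := by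
    refine ⟨⟨⟨Associates.mk (piTwo ^ k), by rw [NA_mk, hcan]⟩⟩, ?_⟩
    rintro ⟨a, ha⟩
    obtain ⟨z, rfl⟩ := Associates.mk_surjective a
    rw [NA_mk] at ha
    exact Subtype.ext (Associates.mk_eq_mk_iff_associated.mpr (rep_two _ z ha)).symm
  exact Nat.card_unique


section SplitPrime

variable {p : ℕ} (hp : p.Prime) (hp1 : p % 4 = 1) {π : ℤi} (hNπ : Nn π = p)

lemma prime_pi (hp : p.Prime) (hNπ : Nn π = p) : Prime π :=
  prime_of_nn_prime (hNπ ▸ hp)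

lemma pi_mul_star (hNπ : Nn π = p) : π * star π = ((p : ℕ) : ℤi) := by
  rw [← cast_Nn, hNπ]

lemma not_assoc_pi_star (hp : p.Prime) (hp1 : p % 4 = 1) (hNπ : Nn π = p) :
    ¬ Associated π (star π) := by
  rintro ⟨u, hu⟩
  have habs : π.re.natAbs * π.re.natAbs + π.im.natAbs * π.im.natAbs = p := by
    rw [← GaussianInt.natAbs_norm_eq]; exact hNπ
  have hanotsq : ∀ c : ℤ, ¬ (c.natAbs * c.natAbs = p) := by
    intro c hc
    rcases (Nat.Prime.eq_one_or_self_of_dvd hp c.natAbs ⟨c.natAbs, hc.symm⟩) with h | h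
    · rw [h] at hc; have := hp.two_le; omega
    · rw [h] at hc; nlinarith [hp.two_le]
  have hsre : (star π).re = π.re := rfl
  have hsim : (star π).im = -π.im := rfl
  rcases isUnit_cases u.isUnit with h | h | h | h <;> rw [h] at hu
  · -- star π = π
    have h1 := congrArg Zsqrtd.im hu
    rw [mul_one, hsim] at h1
    have hb0 : π.im = 0 := by omega
    apply hanotsq π.re
    rw [hb0] at habs; simpa using habs
  · -- star π = -π
    have h1 := congrArg Zsqrtd.re hu
    simp only [Zsqrtd.re_mul, Zsqrtd.im_mul, hsre] at h1
    have ha0 : π.re = 0 := by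
      simp [Zsqrtd.re_neg] at h1
      omega
    apply hanotsq π.im
    rw [ha0] at habs; simpa using habs
  · -- star π = π * i
    have h1 := congrArg Zsqrtd.re hu
    have h2 := congrArg Zsqrtd.im hu
    simp only [Zsqrtd.re_mul, Zsqrtd.im_mul, hsre, hsim] at h1 h2
    norm_num at h1 h2
    -- h1 : π.re = -π.im (roughly), h2 : -π.im = π.re
    have : π.re.natAbs = π.im.natAbs := by omega
    rw [this] at habs
    omega
  · -- star π = π * (-i)
    have h1 := congrArg Zsqrtd.re hu
    have h2 := congrArg Zsqrtd.im hu
    simp only [Zsqrtd.re_mul, Zsqrtd.im_mul, hsre, hsim] at h1 h2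
    norm_num at h1 h2
    have : π.re.natAbs = π.im.natAbs := by omega
    rw [this] at habs
    omega

lemma rep_one (hp : p.Prime) (hNπ : Nn π = p) :
    ∀ k : ℕ, ∀ z : ℤi, Nn z = p ^ k →
      ∃ i ≤ k, Associated (π ^ i * (star π) ^ (k - i)) z := by
  intro k
  induction k with
  | zero => intro z hz; exact ⟨0, le_refl 0, by simpa using unit_of_norm_pow_zero (by simpa using hz)⟩
  | succ k ih =>
    intro z hz
    have hπp : π ∣ ((p : ℕ) : ℤi) := ⟨star π, (pi_mul_star hNπ).symm⟩
    rcases prime_dvd_of_dvd_nn (prime_pi hp hNπ) (t := p)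
        (by rw [hz]; exact dvd_pow_self p (by omega)) hπp with h | h
    · obtain ⟨z', rfl⟩ := h
      have hnz' : Nn z' = p ^ k := by
        have h0 : Nn (π * z') = p * Nn z' := by rw [Nn_mul, hNπ]
        have h1 : p * Nn z' = p * p ^ k := by rw [← h0, hz]; ring
        exact Nat.eq_of_mul_eq_mul_left hp.pos h1
      obtain ⟨i, hik, hassoc⟩ := ih z' hnz'
      refine ⟨i + 1, by omega, ?_⟩
      have h2 : Associated (π * (π ^ i * (star π) ^ (k - i))) (π * z') :=
        Associated.mul_left _ hassoc
      have h3 : π ^ (i + 1) * (star π) ^ (k + 1 - (i + 1)) =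
          π * (π ^ i * (star π) ^ (k - i)) := by
        rw [pow_succ]
        have : k + 1 - (i + 1) = k - i := by omega
        rw [this]; ring
      rwa [h3]
    · obtain ⟨z', rfl⟩ := h
      have hnz' : Nn z' = p ^ k := by
        have h0 : Nn (star π * z') = p * Nn z' := by rw [Nn_mul, Nn_star, hNπ]
        have h1 : p * Nn z' = p * p ^ k := by rw [← h0, hz]; ring
        exact Nat.eq_of_mul_eq_mul_left hp.pos h1
      obtain ⟨i, hik, hassoc⟩ := ih z' hnz'
      refine ⟨i, by omega, ?_⟩
      have h2 : Associated (star π * (π ^ i * (star π) ^ (k - i))) (star π * z') :=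
        Associated.mul_left _ hassoc
      have h3 : π ^ i * (star π) ^ (k + 1 - i) =
          star π * (π ^ i * (star π) ^ (k - i)) := by
        have h4 : k + 1 - i = (k - i) + 1 := by omega
        rw [h4, pow_succ]; ring
      rwa [h3]

lemma inj_one_aux (hp : p.Prime) (hp1 : p % 4 = 1) (hNπ : Nn π = p) (i d e : ℕ)
    (h : Associated (π ^ i * (star π) ^ (d + e)) (π ^ (i + d) * (star π) ^ e)) :
    d = 0 := by
  by_contra hd
  have hπ := prime_pi hp hNπ
  have hπ' := prime_star hπ
  obtain ⟨u, hu⟩ := h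
  rw [pow_add, pow_add] at hu
  have h2 : π ^ i * ((star π) ^ d * (star π) ^ e * ↑u) =
      π ^ i * (π ^ d * (star π) ^ e) := by linear_combination hu
  have h3 := mul_left_cancel₀ (pow_ne_zero i hπ.ne_zero) h2
  have h4 : (star π) ^ d * ↑u * (star π) ^ e = π ^ d * (star π) ^ e := by
    linear_combination h3
  have h5 := mul_right_cancel₀ (pow_ne_zero e hπ'.ne_zero) h4
  have h6 : π ∣ (star π) ^ d * ↑u := by
    rw [h5]; exact dvd_pow_self π hd
  rcases hπ.2.2 _ _ h6 with h7 | h7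
  · have h8 : π ∣ star π := hπ.dvd_of_dvd_pow h7
    exact not_assoc_pi_star hp hp1 hNπ
      (hπ.irreducible.associated_of_dvd hπ'.irreducible h8)
  · exact hπ.not_unit (isUnit_of_dvd_unit h7 u.isUnit)

lemma card_one_mod_four (hp : p.Prime) (hp1 : p % 4 = 1) (hNπ : Nn π = p) (k : ℕ) :
    Cc (p ^ k) = k + 1 := by
  have hπ := prime_pi hp hNπ
  have key : Function.Bijective
      (fun i : Fin (k + 1) =>
        (⟨Associates.mk (π ^ (i : ℕ) * (star π) ^ (k - (i : ℕ))), by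
          rw [NA_mk, Nn_mul, Nn_pow, Nn_pow, Nn_star, hNπ, ← pow_add]
          congr 1
          omega⟩ : {a : Associates GaussianInt // NA a = p ^ k})) := by
    constructor
    · rintro ⟨i, hi⟩ ⟨j, hj⟩ h
      have h0 := congrArg Subtype.val h
      simp only at h0
      rw [Associates.mk_eq_mk_iff_associated] at h0
      have : i = j := by
        rcases le_total i j with hij | hij
        · have hd := inj_one_aux hp hp1 hNπ i (j - i) (k - j) (by
            have e1 : (j - i) + (k - j) = k - i := by omega
            have e2 : i + (j - i) = j := by omega
            rw [e1, e2]; exact h0)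
          omega
        · have hd := inj_one_aux hp hp1 hNπ j (i - j) (k - i) (by
            have e1 : (i - j) + (k - i) = k - j := by omega
            have e2 : j + (i - j) = i := by omega
            rw [e1, e2]; exact h0.symm)
          omega
      simp [this]
    · rintro ⟨a, ha⟩
      obtain ⟨z, rfl⟩ := Associates.mk_surjective a
      rw [NA_mk] at ha
      obtain ⟨i, hik, hassoc⟩ := rep_one hp hNπ k z ha
      exact ⟨⟨i, by omega⟩, Subtype.ext (Associates.mk_eq_mk_iff_associated.mpr hassoc)⟩
  have := Nat.card_congr (Equiv.ofBijective _ key)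
  rw [Cc, ← this, Nat.card_eq_fintype_card, Fintype.card_fin]

end SplitPrime


/-! ### The divisor-sum side -/

/-- the character χ₄ as a function on ℕ -/
def chi (d : ℕ) : ℤ := (if d % 4 = 1 then 1 else 0) - (if d % 4 = 3 then 1 else 0)

lemma chi_mul (a b : ℕ) : chi (a * b) = chi a * chi b := by
  have ha : a % 4 = 0 ∨ a % 4 = 1 ∨ a % 4 = 2 ∨ a % 4 = 3 := by omega
  have hb : b % 4 = 0 ∨ b % 4 = 1 ∨ b % 4 = 2 ∨ b % 4 = 3 := by omega
  rcases ha with h1 | h1 | h1 | h1 <;> rcases hb with h2 | h2 | h2 | h2 <;>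
    simp [chi, Nat.mul_mod, h1, h2]

lemma chi_pow (a k : ℕ) : chi (a ^ k) = chi a ^ k := by
  induction k with
  | zero => simp [chi]
  | succ k ih => rw [pow_succ, pow_succ, chi_mul, ih]

/-- the summatory function -/
def S (n : ℕ) : ℤ := ∑ d ∈ n.divisors, chi d

/-- chi as an arithmetic function -/
def chiA : ArithmeticFunction ℤ := ⟨chi, by simp [chi]⟩

open ArithmeticFunction ArithmeticFunction.zeta in
lemma S_mul {m n : ℕ} (hmn : Nat.Coprime m n) : S (m * n) = S m * S n := by
  have hchi : chiA.IsMultiplicative := by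
    refine ⟨?_, ?_⟩
    · show chi 1 = 1
      simp [chi]
    · intro a b _
      exact chi_mul a b
  have hF : ((ζ : ArithmeticFunction ℤ) * chiA).IsMultiplicative :=
    isMultiplicative_zeta.natCast.mul hchi
  have happ : ∀ t : ℕ, ((ζ : ArithmeticFunction ℤ) * chiA) t = S t := by
    intro t
    rw [coe_zeta_mul_apply]
    rfl
  rw [← happ, ← happ, ← happ, hF.map_mul_of_coprime hmn]

lemma S_one : S 1 = 1 := by
  rw [S, Nat.divisors_one, Finset.sum_singleton]
  simp [chi]

lemma S_two_pow (k : ℕ) : S (2 ^ k) = 1 := by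
  rw [S, Nat.sum_divisors_prime_pow Nat.prime_two]
  have h2 : chi 2 = 0 := by simp [chi]
  simp only [chi_pow, h2]
  rw [Finset.sum_eq_single 0]
  · simp
  · intro b _ hb
    exact zero_pow hb
  · intro h
    simp at h

lemma S_one_mod_four_pow {p : ℕ} (hp : p.Prime) (hp1 : p % 4 = 1) (k : ℕ) :
    S (p ^ k) = (k : ℤ) + 1 := by
  rw [S, Nat.sum_divisors_prime_pow hp]
  have h1 : chi p = 1 := by simp [chi, hp1]
  simp only [chi_pow, h1, one_pow]
  simp

lemma S_three_mod_four_pow {p : ℕ} (hp : p.Prime) (hp3 : p % 4 = 3) (k : ℕ) :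
    S (p ^ k) = if 2 ∣ k then 1 else 0 := by
  rw [S, Nat.sum_divisors_prime_pow hp]
  have h1 : chi p = -1 := by simp [chi, hp3]
  simp only [chi_pow, h1]
  rw [neg_one_geom_sum]
  by_cases h2 : 2 ∣ k
  · rw [if_pos h2, if_neg (show ¬ Even (k + 1) by rw [Nat.even_add_one, Nat.even_iff]; omega)]
  · rw [if_neg h2, if_pos (show Even (k + 1) by rw [Nat.even_add_one, Nat.even_iff]; omega)]

lemma prime_pow_eq {p k : ℕ} (hp : p.Prime) : (Cc (p ^ k) : ℤ) = S (p ^ k) := by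
  rcases hp.eq_two_or_odd' with rfl | hodd
  · rw [card_two, S_two_pow]; simp
  · have h4 : p % 4 = 1 ∨ p % 4 = 3 := by
      have := Nat.odd_iff.mp hodd
      omega
    rcases h4 with h4 | h4
    · haveI : Fact p.Prime := ⟨hp⟩
      obtain ⟨a, b, hab⟩ := Nat.Prime.sq_add_sq (by omega : p % 4 ≠ 3)
      have hNπ : Nn (⟨(a : ℤ), (b : ℤ)⟩ : GaussianInt) = p := by
        rw [Nn, GaussianInt.natAbs_norm_eq]
        simpa [← Nat.pow_two, Int.natAbs_natCast] using hab
      rw [card_one_mod_four hp h4 hNπ, S_one_mod_four_pow hp h4]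
      push_cast; ring
    · rw [card_three hp h4, S_three_mod_four_pow hp h4]
      split <;> simp

lemma main_count : ∀ n : ℕ, 0 < n → (Cc n : ℤ) = S n := by
  intro n
  induction n using Nat.strong_induction_on with
  | _ n ih =>
    intro hn
    rcases eq_or_ne n 1 with rfl | h1
    · rw [Cc_one, S_one]; simp
    have hp : n.minFac.Prime := Nat.minFac_prime h1
    set p := n.minFac with hpdef
    set k := n.factorization p with hkdef
    have hn0 : n ≠ 0 := by omega
    have heq : p ^ k * (n / p ^ k) = n := Nat.ordProj_mul_ordCompl_eq_self n p
    have hcop : Nat.Coprime (p ^ k) (n / p ^ k) :=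
      Nat.Coprime.pow_left k (Nat.coprime_ordCompl hp hn0)
    have hmpos : 0 < n / p ^ k := Nat.ordCompl_pos p hn0
    have hppos : 0 < p ^ k := pow_pos hp.pos k
    have hk0 : k ≠ 0 :=
      (Nat.Prime.factorization_pos_of_dvd hp hn0 (Nat.minFac_dvd n)).ne'
    have hk1 : 1 < p ^ k := Nat.one_lt_pow hk0 hp.one_lt
    have hklt : n / p ^ k < n := Nat.div_lt_self (by omega) hk1
    calc (Cc n : ℤ) = ((Cc (p ^ k) * Cc (n / p ^ k) : ℕ) : ℤ) := by
          rw [← Cc_mul hppos hmpos hcop, heq]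
      _ = (Cc (p ^ k) : ℤ) * (Cc (n / p ^ k) : ℤ) := by push_cast; ring
      _ = S (p ^ k) * S (n / p ^ k) := by rw [prime_pow_eq hp, ih _ hklt hmpos]
      _ = S n := by rw [← S_mul hcop, heq]


lemma norm_mk (a b : ℤ) : (⟨a, b⟩ : GaussianInt).norm = a ^ 2 + b ^ 2 := by
  simp [Zsqrtd.norm]; ring

lemma S_eq_sub (n : ℕ) :
    S n = ((n.divisors.filter (fun d => d % 4 = 1)).card : ℤ) -
          ((n.divisors.filter (fun d => d % 4 = 3)).card : ℤ) := by
  rw [S]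
  simp only [chi]
  rw [Finset.sum_sub_distrib, Finset.sum_boole, Finset.sum_boole]

end Jacobi2

/-- The number of representations of `n` as an ordered sum of two squares of integers. -/
noncomputable def r2 (n : ℕ) : ℕ := Nat.card {p : ℤ × ℤ // p.1 ^ 2 + p.2 ^ 2 = (n : ℤ)}

theorem r2_eq_four_mul_d1_sub_d3 (n : ℕ) (hn : 1 ≤ n) :
    (r2 n : ℤ) =
      4 * (((n.divisors.filter (fun d => d % 4 = 1)).card : ℤ) -
           ((n.divisors.filter (fun d => d % 4 = 3)).card : ℤ)) := by
  open Jacobi2 in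
  have e : {p : ℤ × ℤ // p.1 ^ 2 + p.2 ^ 2 = (n : ℤ)} ≃ {z : GaussianInt // Jacobi2.Nn z = n} :=
    { toFun := fun q => ⟨⟨q.1.1, q.1.2⟩, by
        rw [Jacobi2.Nn_eq_iff, Jacobi2.norm_mk]; exact q.2⟩
      invFun := fun z => ⟨(z.1.re, z.1.im), by
        have h2 := z.2
        rw [Jacobi2.Nn_eq_iff] at h2
        have h3 : z.1.norm = z.1.re ^ 2 + z.1.im ^ 2 := by
          simp [Zsqrtd.norm]; ring
        rw [← h3, h2]⟩
      left_inv := fun q => rfl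
      right_inv := fun z => rfl }
  have h1 : r2 n = 4 * Jacobi2.Cc n := by
    rw [r2, Nat.card_congr e, Jacobi2.card_norm (by omega)]
  rw [h1]
  push_cast
  rw [Jacobi2.main_count n (by omega), Jacobi2.S_eq_sub]
end

section
/- For every real x ≥ 1, the partial sums S_M = Σ_{n=1}^{M} cos(2π√(nx) + π/4)/√n are bounded uniformly in M; that is, there exists a constant C(x) such that |S_M| ≤ C(x) for all M ≥ 1. -/
open Real MeasureTheory intervalIntegral

noncomputable def th (x t : ℝ) : ℝ := 2 * π * Real.sqrt (t * x) + π / 4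
noncomputable def ff (x t : ℝ) : ℝ := Real.cos (th x t) / Real.sqrt t
noncomputable def gg (x t : ℝ) : ℝ := Real.sin (th x t) / (π * Real.sqrt x)
noncomputable def hh (x t : ℝ) : ℝ := Real.cos (th x t) / (π * Real.sqrt x * Real.sqrt t)
noncomputable def s1 (x t : ℝ) : ℝ := Real.sin (th x t) / t
noncomputable def q2 (x c t : ℝ) : ℝ := ((t - c - 1/2) * Real.sin (th x t)) / t
noncomputable def p3 (x c t : ℝ) : ℝ := ((t - c) * Real.cos (th x t)) / (2 * t * Real.sqrt t)
noncomputable def w1 (x c t : ℝ) : ℝ :=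
  ((t - c) * (t - c - 1) * (π * Real.sqrt x * Real.cos (th x t))) / (2 * t * Real.sqrt t)
noncomputable def w2 (x c t : ℝ) : ℝ := ((t - c) * (t - c - 1) * Real.sin (th x t)) / (2 * t ^ 2)

lemma uIcc_pos {a b t : ℝ} (ha : 0 < a) (hb : 0 < b) (ht : t ∈ Set.uIcc a b) : 0 < t := by
  rcases Set.mem_uIcc.1 ht with ⟨h1, _⟩ | ⟨h1, _⟩ <;> linarith

lemma cont_costh (x : ℝ) : Continuous fun t => Real.cos (th x t) := by unfold th; fun_prop
lemma cont_sinth (x : ℝ) : Continuous fun t => Real.sin (th x t) := by unfold th; fun_prop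

/-- generic integrability of a quotient with denominator nonvanishing on positives -/
lemma II {a b : ℝ} (ha : 0 < a) (hb : 0 < b) {A B : ℝ → ℝ} (hA : Continuous A)
    (hB : Continuous B) (hBne : ∀ t, 0 < t → B t ≠ 0) :
    IntervalIntegrable (fun t => A t / B t) volume a b :=
  (hA.continuousOn.div hB.continuousOn
    (fun t ht => hBne t (uIcc_pos ha hb ht))).intervalIntegrable

lemma sqrt_cont : Continuous Real.sqrt := Real.continuous_sqrt

lemma II_ff {a b : ℝ} (x : ℝ) (ha : 0 < a) (hb : 0 < b) :
    IntervalIntegrable (ff x) volume a b :=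
  II ha hb (cont_costh x) sqrt_cont (fun t ht => (Real.sqrt_pos.2 ht).ne')

lemma II_s1 {a b : ℝ} (x : ℝ) (ha : 0 < a) (hb : 0 < b) :
    IntervalIntegrable (s1 x) volume a b :=
  II ha hb (cont_sinth x) continuous_id (fun t ht => ht.ne')

lemma II_q2 {a b : ℝ} (x c : ℝ) (ha : 0 < a) (hb : 0 < b) :
    IntervalIntegrable (q2 x c) volume a b :=
  II ha hb (by have := cont_sinth x; fun_prop) continuous_id (fun t ht => ht.ne')

lemma II_p3 {a b : ℝ} (x c : ℝ) (ha : 0 < a) (hb : 0 < b) :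
    IntervalIntegrable (p3 x c) volume a b :=
  II ha hb (by have := cont_costh x; fun_prop) (by fun_prop)
    (fun t ht => by positivity)

lemma II_w1 {a b : ℝ} (x c : ℝ) (ha : 0 < a) (hb : 0 < b) :
    IntervalIntegrable (w1 x c) volume a b :=
  II ha hb (by have := cont_costh x; fun_prop) (by fun_prop)
    (fun t ht => by positivity)

lemma II_w2 {a b : ℝ} (x c : ℝ) (ha : 0 < a) (hb : 0 < b) :
    IntervalIntegrable (w2 x c) volume a b :=
  II ha hb (by have := cont_sinth x; fun_prop) (by fun_prop)
    (fun t ht => by positivity)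

lemma II_tsq {a b : ℝ} (ha : 0 < a) (hb : 0 < b) :
    IntervalIntegrable (fun t : ℝ => 1 / (t * Real.sqrt t)) volume a b :=
  II ha hb continuous_const (by fun_prop) (fun t ht => by positivity)

lemma II_t2 {a b : ℝ} (ha : 0 < a) (hb : 0 < b) :
    IntervalIntegrable (fun t : ℝ => 1 / t ^ 2) volume a b :=
  II ha hb continuous_const (by fun_prop) (fun t ht => by positivity)

lemma II_hder {a b : ℝ} {x : ℝ} (hx : 0 < x) (ha : 0 < a) (hb : 0 < b) :
    IntervalIntegrable
      (fun t => -(Real.sin (th x t)) / t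
        - Real.cos (th x t) / (2 * π * Real.sqrt x * t * Real.sqrt t)) volume a b := by
  apply IntervalIntegrable.sub
  · exact II ha hb (by have := cont_sinth x; fun_prop) continuous_id (fun t ht => ht.ne')
  · exact II ha hb (cont_costh x) (by fun_prop)
      (fun t ht => by have := Real.pi_pos; have hsx := Real.sqrt_pos.2 hx; positivity)

section derivs
variable {x t : ℝ}

lemma hasDerivAt_th (hx : 0 < x) (ht : 0 < t) :
    HasDerivAt (th x) (π * Real.sqrt x / Real.sqrt t) t := by
  have h1 : HasDerivAt (fun t : ℝ => t * x) x t := by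
    simpa using (hasDerivAt_id t).mul_const x
  have h2 : HasDerivAt (fun t : ℝ => Real.sqrt (t * x)) (x / (2 * Real.sqrt (t * x))) t :=
    (Real.hasDerivAt_sqrt (by positivity)).comp t h1 |>.congr_deriv (by ring)
  have h3 := (h2.const_mul (2 * π)).add_const (π / 4)
  refine h3.congr_deriv ?_; symm
  rw [Real.sqrt_mul ht.le]
  have hst : Real.sqrt t ≠ 0 := by positivity
  have hsx : Real.sqrt x ≠ 0 := by positivity
  have hxx : Real.sqrt x * Real.sqrt x = x := Real.mul_self_sqrt hx.le
  field_simp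
  linear_combination hxx

lemma hasDerivAt_gg (hx : 0 < x) (ht : 0 < t) :
    HasDerivAt (gg x) (ff x t) t := by
  have hs : HasDerivAt (fun t => Real.sin (th x t))
      (Real.cos (th x t) * (π * Real.sqrt x / Real.sqrt t)) t :=
    (Real.hasDerivAt_sin _).comp t (hasDerivAt_th hx ht)
  have := hs.div_const (π * Real.sqrt x)
  refine this.congr_deriv ?_; symm
  unfold ff
  have hst : Real.sqrt t ≠ 0 := by positivity
  have hsx : Real.sqrt x ≠ 0 := by positivity
  field_simp

lemma hasDerivAt_hh (hx : 0 < x) (ht : 0 < t) :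
    HasDerivAt (hh x)
      (-(Real.sin (th x t)) / t
        - Real.cos (th x t) / (2 * π * Real.sqrt x * t * Real.sqrt t)) t := by
  have hst : Real.sqrt t ≠ 0 := by positivity
  have hsx : Real.sqrt x ≠ 0 := by positivity
  have htt : Real.sqrt t * Real.sqrt t = t := Real.mul_self_sqrt ht.le
  have hc : HasDerivAt (fun t => Real.cos (th x t))
      (-Real.sin (th x t) * (π * Real.sqrt x / Real.sqrt t)) t :=
    (Real.hasDerivAt_cos _).comp t (hasDerivAt_th hx ht)
  have hs : HasDerivAt (fun s => π * Real.sqrt x * Real.sqrt s)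
      (π * Real.sqrt x * (1 / (2 * Real.sqrt t))) t :=
    (Real.hasDerivAt_sqrt ht.ne').const_mul _
  have := hc.div hs (by positivity)
  refine this.congr_deriv ?_; symm
  have h3 : Real.sqrt t ^ 3 = t * Real.sqrt t := by
    rw [pow_succ, sq, htt]
  have hpi := Real.pi_ne_zero
  rw [mul_pow, mul_pow, Real.sq_sqrt ht.le, Real.sq_sqrt hx.le]
  field_simp
  linear_combination (2 * Real.sin (th x t) * π * Real.sqrt x * Real.sqrt t
    + Real.cos (th x t)) * (Real.sq_sqrt hx.le)

/-- derivative of `(t - c) * ff x t` -/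
lemma hasDerivAt_u (hx : 0 < x) (ht : 0 < t) (c : ℝ) :
    HasDerivAt (fun t => (t - c) * ff x t)
      (ff x t - π * Real.sqrt x * (((t - c) * Real.sin (th x t)) / t)
        - ((t - c) * Real.cos (th x t)) / (2 * t * Real.sqrt t)) t := by
  have hst : Real.sqrt t ≠ 0 := by positivity
  have htt : Real.sqrt t * Real.sqrt t = t := Real.mul_self_sqrt ht.le
  have hc : HasDerivAt (fun t => Real.cos (th x t))
      (-Real.sin (th x t) * (π * Real.sqrt x / Real.sqrt t)) t :=
    (Real.hasDerivAt_cos _).comp t (hasDerivAt_th hx ht)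
  have hs : HasDerivAt Real.sqrt (1 / (2 * Real.sqrt t)) t := Real.hasDerivAt_sqrt ht.ne'
  have hf : HasDerivAt (ff x)
      ((-Real.sin (th x t) * (π * Real.sqrt x / Real.sqrt t) * Real.sqrt t
        - Real.cos (th x t) * (1 / (2 * Real.sqrt t))) / Real.sqrt t ^ 2) t := hc.div hs hst
  have := ((hasDerivAt_id t).sub_const c).mul hf
  refine this.congr_deriv ?_; symm
  have h3 : Real.sqrt t ^ 3 = t * Real.sqrt t := by rw [pow_succ, sq, htt]
  rw [Real.sq_sqrt ht.le]
  unfold ff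
  field_simp
  simp only [id_eq]
  ring

/-- derivative of the sawtooth primitive `v` -/
lemma hasDerivAt_v (hx : 0 < x) (ht : 0 < t) (c : ℝ) :
    HasDerivAt (fun t => ((t - c) * (t - c - 1) * Real.sin (th x t)) / (2 * t))
      (q2 x c t + w1 x c t - w2 x c t) t := by
  have hst : Real.sqrt t ≠ 0 := by positivity
  have htt : Real.sqrt t * Real.sqrt t = t := Real.mul_self_sqrt ht.le
  have hsin : HasDerivAt (fun t => Real.sin (th x t))
      (Real.cos (th x t) * (π * Real.sqrt x / Real.sqrt t)) t :=
    (Real.hasDerivAt_sin _).comp t (hasDerivAt_th hx ht)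
  have hP : HasDerivAt (fun t : ℝ => (t - c) * (t - c - 1)) ((t - c - 1) + (t - c)) t := by
    exact (((hasDerivAt_id t).sub_const c).mul (((hasDerivAt_id t).sub_const c).sub_const 1)).congr_deriv
      (by simp only [id, one_mul, mul_one])
  have hN := hP.mul hsin
  have hD : HasDerivAt (fun t : ℝ => 2 * t) 2 t := by
    simpa using (hasDerivAt_id t).const_mul 2
  have := hN.div hD (by positivity)
  refine this.congr_deriv ?_; symm
  unfold q2 w1 w2
  simp only [Pi.mul_apply]
  have h3 : Real.sqrt t ^ 3 = t * Real.sqrt t := by rw [pow_succ, sq, htt]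
  field_simp
  ring

end derivs

section ftc
variable {x a b : ℝ}

lemma integral_ff (hx : 0 < x) (ha : 0 < a) (hb : 0 < b) :
    ∫ t in a..b, ff x t = gg x b - gg x a :=
  integral_eq_sub_of_hasDerivAt
    (fun t ht => hasDerivAt_gg hx (uIcc_pos ha hb ht)) (II_ff x ha hb)

lemma integral_hder (hx : 0 < x) (ha : 0 < a) (hb : 0 < b) :
    ∫ t in a..b, (-(Real.sin (th x t)) / t
        - Real.cos (th x t) / (2 * π * Real.sqrt x * t * Real.sqrt t))
      = hh x b - hh x a :=
  integral_eq_sub_of_hasDerivAt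
    (fun t ht => hasDerivAt_hh hx (uIcc_pos ha hb ht)) (II_hder hx ha hb)

lemma integral_b1 (ha : 0 < a) (hb : 0 < b) :
    ∫ t in a..b, 1 / (t * Real.sqrt t) = 2 / Real.sqrt a - 2 / Real.sqrt b := by
  have : ∀ t ∈ Set.uIcc a b, HasDerivAt (fun s => -2 / Real.sqrt s) (1 / (t * Real.sqrt t)) t := by
    intro t ht
    have ht0 := uIcc_pos ha hb ht
    have hst : Real.sqrt t ≠ 0 := by positivity
    have htt : Real.sqrt t * Real.sqrt t = t := Real.mul_self_sqrt ht0.le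
    have := (hasDerivAt_const t (-2 : ℝ)).div (Real.hasDerivAt_sqrt ht0.ne') hst
    refine this.congr_deriv ?_; symm
    have h3 : Real.sqrt t ^ 3 = t * Real.sqrt t := by rw [pow_succ, sq, htt]
    rw [Real.sq_sqrt ht0.le]
    field_simp
    ring
  rw [integral_eq_sub_of_hasDerivAt this (II_tsq ha hb)]
  ring

lemma integral_b2 (ha : 0 < a) (hb : 0 < b) :
    ∫ t in a..b, 1 / t ^ 2 = 1 / a - 1 / b := by
  have : ∀ t ∈ Set.uIcc a b, HasDerivAt (fun s => -1 / s) (1 / t ^ 2) t := by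
    intro t ht
    have ht0 := uIcc_pos ha hb ht
    have := (hasDerivAt_const t (-1 : ℝ)).div (hasDerivAt_id t) ht0.ne'
    refine this.congr_deriv ?_; symm
    simp only [id_eq, zero_mul, mul_one, zero_sub, neg_neg]
  rw [integral_eq_sub_of_hasDerivAt this (II_t2 ha hb)]
  ring

/-- the per-interval decomposition identity -/
lemma interval_key (hx : 0 < x) {c : ℝ} (hc : 0 < c) :
    ff x (c + 1) = (gg x (c + 1) - gg x c)
      - π * Real.sqrt x * ((∫ t in c..(c+1), q2 x c t) + (1/2) * ∫ t in c..(c+1), s1 x t)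
      - ∫ t in c..(c+1), p3 x c t := by
  have hc1 : (0:ℝ) < c + 1 := by linarith
  have hu : ∫ t in c..(c+1),
      (ff x t - π * Real.sqrt x * (((t - c) * Real.sin (th x t)) / t)
        - ((t - c) * Real.cos (th x t)) / (2 * t * Real.sqrt t)) = ff x (c+1) := by
    rw [integral_eq_sub_of_hasDerivAt
      (fun t ht => hasDerivAt_u hx (uIcc_pos hc hc1 ht) c) ?_]
    · simp
    · apply IntervalIntegrable.sub
      apply IntervalIntegrable.sub (II_ff x hc hc1)
      · exact (II hc hc1 (by have := cont_sinth x; fun_prop) continuous_id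
          (fun t ht => ht.ne')).const_mul _
      · exact II hc hc1 (by have := cont_costh x; fun_prop) (by fun_prop)
          (fun t ht => by positivity)
  have hsplit : (fun t => π * Real.sqrt x * (((t - c) * Real.sin (th x t)) / t))
      = fun t => π * Real.sqrt x * (q2 x c t + (1/2) * s1 x t) := by
    funext t
    unfold q2 s1
    ring
  have iB : IntervalIntegrable
      (fun t => π * Real.sqrt x * (((t - c) * Real.sin (th x t)) / t)) volume c (c+1) :=
    (II hc hc1 (by have := cont_sinth x; fun_prop) continuous_id
      (fun t ht => ht.ne')).const_mul _
  have iC : IntervalIntegrable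
      (fun t => ((t - c) * Real.cos (th x t)) / (2 * t * Real.sqrt t)) volume c (c+1) :=
    II hc hc1 (by have := cont_costh x; fun_prop) (by fun_prop) (fun t ht => by positivity)
  rw [integral_sub ((II_ff x hc hc1).sub iB) iC, integral_sub (II_ff x hc hc1) iB,
    integral_ff hx hc hc1, hsplit, intervalIntegral.integral_const_mul,
    integral_add (II_q2 x c hc hc1) ((II_s1 x hc hc1).const_mul _),
    intervalIntegral.integral_const_mul] at hu
  have hp3 : (fun t => ((t - c) * Real.cos (th x t)) / (2 * t * Real.sqrt t)) = p3 x c := rfl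
  rw [hp3] at hu
  linarith [hu]

/-- integration by parts for the centered sawtooth piece -/
lemma I2_eq (hx : 0 < x) {c : ℝ} (hc : 0 < c) :
    ∫ t in c..(c+1), q2 x c t
      = (∫ t in c..(c+1), w2 x c t) - ∫ t in c..(c+1), w1 x c t := by
  have hc1 : (0:ℝ) < c + 1 := by linarith
  have hv : ∫ t in c..(c+1), (q2 x c t + w1 x c t - w2 x c t) = 0 := by
    rw [integral_eq_sub_of_hasDerivAt
      (fun t ht => hasDerivAt_v hx (uIcc_pos hc hc1 ht) c) ?_]
    · simp
    · exact ((II_q2 x c hc hc1).add (II_w1 x c hc hc1)).sub (II_w2 x c hc hc1)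
  rw [integral_sub ((II_q2 x c hc hc1).add (II_w1 x c hc hc1)) (II_w2 x c hc hc1),
    integral_add (II_q2 x c hc hc1) (II_w1 x c hc hc1)] at hv
  linarith [hv]

lemma abs_w1_int (hx : 0 < x) {c : ℝ} (hc : 0 < c) :
    |∫ t in c..(c+1), w1 x c t|
      ≤ π * Real.sqrt x / 8 * (2 / Real.sqrt c - 2 / Real.sqrt (c+1)) := by
  have hc1 : (0:ℝ) < c + 1 := by linarith
  have hPS : (0:ℝ) < π * Real.sqrt x := by have := Real.pi_pos; positivity
  have hbd := intervalIntegral.norm_integral_le_of_norm_le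
    (f := w1 x c) (g := fun t => π * Real.sqrt x / 8 * (1 / (t * Real.sqrt t)))
    (a := c) (b := c+1) (μ := volume) (by linarith) ?_ ((II_tsq hc hc1).const_mul _)
  · rw [intervalIntegral.integral_const_mul, integral_b1 hc hc1] at hbd
    rw [Real.norm_eq_abs] at hbd
    refine hbd.trans ((le_abs_self _).trans (le_of_eq (abs_of_nonneg ?_)))
    have h1 : Real.sqrt c ≤ Real.sqrt (c+1) := Real.sqrt_le_sqrt (by linarith)
    have h2 : (0:ℝ) < Real.sqrt c := Real.sqrt_pos.2 hc
    have h3 : 2 / Real.sqrt (c+1) ≤ 2 / Real.sqrt c := by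
      apply div_le_div_of_nonneg_left (by norm_num) h2 h1
    have h4 : (0:ℝ) ≤ 2 / Real.sqrt c - 2 / Real.sqrt (c+1) := by linarith
    exact mul_nonneg (by positivity) h4
  · refine Filter.Eventually.of_forall fun t ht => ?_
    obtain ⟨h1, h2⟩ := ht
    have ht0 : 0 < t := lt_trans hc h1
    have hst : (0:ℝ) < Real.sqrt t := Real.sqrt_pos.2 ht0
    rw [Real.norm_eq_abs]
    unfold w1
    rw [abs_div, abs_of_pos (show (0:ℝ) < 2 * t * Real.sqrt t by positivity)]
    have hnum : |(t - c) * (t - c - 1) * (π * Real.sqrt x * Real.cos (th x t))|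
        ≤ π * Real.sqrt x / 4 := by
      rw [abs_mul]
      have h4 : |(t - c) * (t - c - 1)| ≤ 1/4 := by
        rw [abs_le]
        constructor
        · nlinarith [sq_nonneg (t - c - 1/2)]
        · nlinarith
      have h5 : |π * Real.sqrt x * Real.cos (th x t)| ≤ π * Real.sqrt x := by
        rw [abs_mul, abs_of_pos hPS]
        have := Real.abs_cos_le_one (th x t)
        nlinarith
      calc |(t - c) * (t - c - 1)| * |π * Real.sqrt x * Real.cos (th x t)|
          ≤ (1/4) * (π * Real.sqrt x) :=
            mul_le_mul h4 h5 (abs_nonneg _) (by norm_num)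
        _ = π * Real.sqrt x / 4 := by ring
    calc |(t - c) * (t - c - 1) * (π * Real.sqrt x * Real.cos (th x t))| / (2 * t * Real.sqrt t)
        ≤ (π * Real.sqrt x / 4) / (2 * t * Real.sqrt t) := by
          gcongr
      _ = π * Real.sqrt x / 8 * (1 / (t * Real.sqrt t)) := by ring

lemma abs_w2_int (x : ℝ) {c : ℝ} (hc : 0 < c) :
    |∫ t in c..(c+1), w2 x c t| ≤ 1/8 * (1/c - 1/(c+1)) := by
  have hc1 : (0:ℝ) < c + 1 := by linarith
  have hbd := intervalIntegral.norm_integral_le_of_norm_le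
    (f := w2 x c) (g := fun t => 1/8 * (1 / t ^ 2))
    (a := c) (b := c+1) (μ := volume) (by linarith) ?_ ((II_t2 hc hc1).const_mul _)
  · rw [intervalIntegral.integral_const_mul, integral_b2 hc hc1] at hbd
    rw [Real.norm_eq_abs] at hbd
    refine hbd.trans ((le_abs_self _).trans (le_of_eq (abs_of_nonneg ?_)))
    have h3 : 1/(c+1) ≤ 1/c := by
      apply div_le_div_of_nonneg_left (by norm_num) hc (by linarith)
    have h4 : (0:ℝ) ≤ 1/c - 1/(c+1) := by linarith
    positivity
  · refine Filter.Eventually.of_forall fun t ht => ?_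
    obtain ⟨h1, h2⟩ := ht
    have ht0 : 0 < t := lt_trans hc h1
    rw [Real.norm_eq_abs]
    unfold w2
    rw [abs_div, abs_of_pos (show (0:ℝ) < 2 * t ^ 2 by positivity)]
    have hnum : |(t - c) * (t - c - 1) * Real.sin (th x t)| ≤ 1/4 := by
      rw [abs_mul]
      have h4 : |(t - c) * (t - c - 1)| ≤ 1/4 := by
        rw [abs_le]
        constructor
        · nlinarith [sq_nonneg (t - c - 1/2)]
        · nlinarith
      have h5 : |Real.sin (th x t)| ≤ 1 := Real.abs_sin_le_one _
      calc |(t - c) * (t - c - 1)| * |Real.sin (th x t)| ≤ (1/4) * 1 :=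
            mul_le_mul h4 h5 (abs_nonneg _) (by norm_num)
        _ = 1/4 := by ring
    calc |(t - c) * (t - c - 1) * Real.sin (th x t)| / (2 * t ^ 2)
        ≤ (1/4) / (2 * t ^ 2) := by gcongr
      _ = 1/8 * (1 / t ^ 2) := by ring

lemma abs_p3_int (x : ℝ) {c : ℝ} (hc : 0 < c) :
    |∫ t in c..(c+1), p3 x c t| ≤ 1/2 * (2 / Real.sqrt c - 2 / Real.sqrt (c+1)) := by
  have hc1 : (0:ℝ) < c + 1 := by linarith
  have hbd := intervalIntegral.norm_integral_le_of_norm_le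
    (f := p3 x c) (g := fun t => 1/2 * (1 / (t * Real.sqrt t)))
    (a := c) (b := c+1) (μ := volume) (by linarith) ?_ ((II_tsq hc hc1).const_mul _)
  · rw [intervalIntegral.integral_const_mul, integral_b1 hc hc1] at hbd
    rw [Real.norm_eq_abs] at hbd
    refine hbd.trans ((le_abs_self _).trans (le_of_eq (abs_of_nonneg ?_)))
    have h1 : Real.sqrt c ≤ Real.sqrt (c+1) := Real.sqrt_le_sqrt (by linarith)
    have h2 : (0:ℝ) < Real.sqrt c := Real.sqrt_pos.2 hc
    have h3 : 2 / Real.sqrt (c+1) ≤ 2 / Real.sqrt c := by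
      apply div_le_div_of_nonneg_left (by norm_num) h2 h1
    have h4 : (0:ℝ) ≤ 2 / Real.sqrt c - 2 / Real.sqrt (c+1) := by linarith
    positivity
  · refine Filter.Eventually.of_forall fun t ht => ?_
    obtain ⟨h1, h2⟩ := ht
    have ht0 : 0 < t := lt_trans hc h1
    have hst : (0:ℝ) < Real.sqrt t := Real.sqrt_pos.2 ht0
    rw [Real.norm_eq_abs]
    unfold p3
    rw [abs_div, abs_of_pos (show (0:ℝ) < 2 * t * Real.sqrt t by positivity)]
    have hnum : |(t - c) * Real.cos (th x t)| ≤ 1 := by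
      rw [abs_mul]
      have h4 : |t - c| ≤ 1 := by rw [abs_le]; constructor <;> linarith
      have h5 : |Real.cos (th x t)| ≤ 1 := Real.abs_cos_le_one _
      calc |t - c| * |Real.cos (th x t)| ≤ 1 * 1 :=
            mul_le_mul h4 h5 (abs_nonneg _) (by norm_num)
        _ = 1 := by ring
    calc |(t - c) * Real.cos (th x t)| / (2 * t * Real.sqrt t)
        ≤ 1 / (2 * t * Real.sqrt t) := by gcongr
      _ = 1/2 * (1 / (t * Real.sqrt t)) := by ring

lemma abs_hh_le {x t : ℝ} (hx : 0 < x) (ht : 1 ≤ t) :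
    |hh x t| ≤ 1 / (π * Real.sqrt x) := by
  have hPS : (0:ℝ) < π * Real.sqrt x := by have := Real.pi_pos; positivity
  have hst : (1:ℝ) ≤ Real.sqrt t := by
    rw [show (1:ℝ) = Real.sqrt 1 by simp]; exact Real.sqrt_le_sqrt ht
  unfold hh
  rw [abs_div, abs_of_pos (by positivity : (0:ℝ) < π * Real.sqrt x * Real.sqrt t)]
  have h5 : |Real.cos (th x t)| ≤ 1 := Real.abs_cos_le_one _
  calc |Real.cos (th x t)| / (π * Real.sqrt x * Real.sqrt t)
      ≤ 1 / (π * Real.sqrt x * 1) := by gcongr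
    _ = 1 / (π * Real.sqrt x) := by ring

lemma abs_s1_int {x b : ℝ} (hx : 1 ≤ x) (hb : 1 ≤ b) :
    |∫ t in (1:ℝ)..b, s1 x t| ≤ 3 / (π * Real.sqrt x) := by
  have hx0 : (0:ℝ) < x := by linarith
  have hb0 : (0:ℝ) < b := by linarith
  have hPS : (0:ℝ) < π * Real.sqrt x := by have := Real.pi_pos; positivity
  have hid := integral_hder hx0 one_pos hb0
  have hi1 : IntervalIntegrable (fun t => -(Real.sin (th x t)) / t) volume 1 b :=
    II one_pos hb0 (by have := cont_sinth x; fun_prop) continuous_id (fun t ht => ht.ne')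
  have hi2 : IntervalIntegrable
      (fun t => Real.cos (th x t) / (2 * π * Real.sqrt x * t * Real.sqrt t)) volume 1 b :=
    II one_pos hb0 (cont_costh x) (by fun_prop)
      (fun t ht => by have := Real.pi_pos; have := Real.sqrt_pos.2 hx0; positivity)
  rw [integral_sub hi1 hi2] at hid
  have hneg : (∫ t in (1:ℝ)..b, -(Real.sin (th x t)) / t) = - ∫ t in (1:ℝ)..b, s1 x t := by
    rw [← intervalIntegral.integral_neg]
    apply intervalIntegral.integral_congr
    intro t _
    unfold s1
    ring
  rw [hneg] at hid
  -- bound the correction integral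
  have hbd := intervalIntegral.norm_integral_le_of_norm_le
    (f := fun t => Real.cos (th x t) / (2 * π * Real.sqrt x * t * Real.sqrt t))
    (g := fun t => 1 / (2 * π * Real.sqrt x) * (1 / (t * Real.sqrt t)))
    (a := 1) (b := b) (μ := volume) hb ?_ ((II_tsq one_pos hb0).const_mul _)
  · rw [intervalIntegral.integral_const_mul, integral_b1 one_pos hb0] at hbd
    rw [Real.norm_eq_abs] at hbd
    have hsb : (0:ℝ) < Real.sqrt b := Real.sqrt_pos.2 hb0
    have hsb1 : (1:ℝ) ≤ Real.sqrt b := by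
      rw [show (1:ℝ) = Real.sqrt 1 by simp]; exact Real.sqrt_le_sqrt hb
    have hval : |1 / (2 * π * Real.sqrt x) * (2 / Real.sqrt 1 - 2 / Real.sqrt b)|
        ≤ 1 / (π * Real.sqrt x) := by
      rw [abs_of_nonneg]
      · rw [Real.sqrt_one]
        have : 2 / Real.sqrt b ≥ 0 := by positivity
        calc 1 / (2 * π * Real.sqrt x) * (2 / 1 - 2 / Real.sqrt b)
            ≤ 1 / (2 * π * Real.sqrt x) * 2 := by
              apply mul_le_mul_of_nonneg_left (by linarith) (by positivity)
          _ = 1 / (π * Real.sqrt x) := by field_simp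
      · rw [Real.sqrt_one]
        have h3 : 2 / Real.sqrt b ≤ 2 / 1 := by
          apply div_le_div_of_nonneg_left (by norm_num) one_pos hsb1
        have h4 : (0:ℝ) ≤ 2 / 1 - 2 / Real.sqrt b := by linarith
        positivity
    -- assemble
    have hM := abs_hh_le hx0 hb
    have h1 := abs_hh_le hx0 (le_refl (1:ℝ))
    have := hbd.trans ((le_abs_self _).trans hval)
    have heq : ∫ t in (1:ℝ)..b, s1 x t
        = -(hh x b - hh x 1)
          - ∫ t in (1:ℝ)..b, Real.cos (th x t) / (2 * π * Real.sqrt x * t * Real.sqrt t) := by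
      linarith [hid]
    rw [heq]
    have habs := abs_sub (-(hh x b - hh x 1))
      (∫ t in (1:ℝ)..b, Real.cos (th x t) / (2 * π * Real.sqrt x * t * Real.sqrt t))
    calc |(-(hh x b - hh x 1))
          - ∫ t in (1:ℝ)..b, Real.cos (th x t) / (2 * π * Real.sqrt x * t * Real.sqrt t)|
        ≤ |hh x b| + |hh x 1|
          + |∫ t in (1:ℝ)..b, Real.cos (th x t) / (2 * π * Real.sqrt x * t * Real.sqrt t)| := by
          have := abs_sub_abs_le_abs_sub (hh x b) (hh x 1)
          have t1 : |(-(hh x b - hh x 1))| ≤ |hh x b| + |hh x 1| := by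
            rw [abs_neg]
            exact (abs_sub _ _)
          calc _ ≤ |(-(hh x b - hh x 1))|
                + |∫ t in (1:ℝ)..b, Real.cos (th x t) / (2 * π * Real.sqrt x * t * Real.sqrt t)| :=
              abs_sub _ _
            _ ≤ _ := by linarith
      _ ≤ 1 / (π * Real.sqrt x) + 1 / (π * Real.sqrt x) + 1 / (π * Real.sqrt x) := by
          linarith
      _ = 3 / (π * Real.sqrt x) := by ring
  · refine Filter.Eventually.of_forall fun t ht => ?_
    obtain ⟨h1, h2⟩ := ht
    have ht0 : (0:ℝ) < t := lt_trans one_pos h1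
    have hst : (0:ℝ) < Real.sqrt t := Real.sqrt_pos.2 ht0
    rw [Real.norm_eq_abs, abs_div,
      abs_of_pos (show (0:ℝ) < 2 * π * Real.sqrt x * t * Real.sqrt t by positivity)]
    have h5 : |Real.cos (th x t)| ≤ 1 := Real.abs_cos_le_one _
    calc |Real.cos (th x t)| / (2 * π * Real.sqrt x * t * Real.sqrt t)
        ≤ 1 / (2 * π * Real.sqrt x * t * Real.sqrt t) := by gcongr
      _ = 1 / (2 * π * Real.sqrt x) * (1 / (t * Real.sqrt t)) := by ring

end ftc

lemma abs_gg_le {x : ℝ} (hx : 0 < x) (t : ℝ) : |gg x t| ≤ 1 / (π * Real.sqrt x) := by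
  have hPS : (0:ℝ) < π * Real.sqrt x := by have := Real.pi_pos; positivity
  unfold gg
  rw [abs_div, abs_of_pos hPS]
  have h5 : |Real.sin (th x t)| ≤ 1 := Real.abs_sin_le_one _
  gcongr

set_option maxHeartbeats 1000000 in
theorem partial_sums_bounded (x : ℝ) (hx : 1 ≤ x) :
    ∃ C : ℝ, ∀ M : ℕ, 1 ≤ M →
      |∑ n ∈ Finset.Icc 1 M, cos (2 * π * Real.sqrt (n * x) + π / 4) / Real.sqrt n| ≤ C := by
  have hx0 : (0:ℝ) < x := by linarith
  have hsx : (1:ℝ) ≤ Real.sqrt x := by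
    rw [show (1:ℝ) = Real.sqrt 1 by simp]; exact Real.sqrt_le_sqrt hx
  have hπ : (3:ℝ) ≤ π := by linarith [Real.pi_gt_three]
  have hPS1 : (1:ℝ) ≤ π * Real.sqrt x := by nlinarith
  have hPS0 : (0:ℝ) < π * Real.sqrt x := by linarith
  refine ⟨7 + (π * Real.sqrt x) * (π * Real.sqrt x), ?_⟩
  intro M hM
  obtain ⟨N, rfl⟩ : ∃ N, M = N + 1 := ⟨M - 1, (Nat.succ_pred_eq_of_pos hM).symm⟩
  have hN0 : (0:ℝ) ≤ (N:ℝ) := Nat.cast_nonneg N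
  have hN1 : (1:ℝ) ≤ (N:ℝ) + 1 := by linarith
  have hsum0 : (∑ n ∈ Finset.Icc 1 (N+1),
        Real.cos (2 * π * Real.sqrt (↑n * x) + π / 4) / Real.sqrt ↑n)
      = ∑ n ∈ Finset.Icc 1 (N+1), ff x ↑n := by
    apply Finset.sum_congr rfl
    intro n _
    rfl
  rw [hsum0]
  -- reindex
  have hre : ∑ n ∈ Finset.Icc 1 (N+1), ff x ↑n
      = (∑ k ∈ Finset.range N, ff x (((k:ℝ)+1)+1)) + ff x 1 := by
    rw [← Finset.Ico_add_one_right_eq_Icc, Finset.sum_Ico_eq_sum_range]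
    have h2 : N + 1 + 1 - 1 = N + 1 := rfl
    rw [h2, Finset.sum_range_succ']
    congr 1
    · apply Finset.sum_congr rfl
      intro k _
      congr 1
      push_cast; ring
    · norm_num
  rw [hre]
  -- per interval identity
  have hk : ∀ k : ℕ, ff x (((k:ℝ)+1)+1)
      = (gg x (((k:ℝ)+1)+1) - gg x ((k:ℝ)+1))
        - π * Real.sqrt x * ((∫ t in ((k:ℝ)+1)..(((k:ℝ)+1)+1), q2 x ((k:ℝ)+1) t)
            + (1/2) * ∫ t in ((k:ℝ)+1)..(((k:ℝ)+1)+1), s1 x t)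
        - ∫ t in ((k:ℝ)+1)..(((k:ℝ)+1)+1), p3 x ((k:ℝ)+1) t :=
    fun k => interval_key hx0 (by positivity)
  rw [Finset.sum_congr rfl (fun k _ => hk k)]
  rw [Finset.sum_sub_distrib, Finset.sum_sub_distrib]
  -- telescope gg
  have htel : ∑ k ∈ Finset.range N, (gg x (((k:ℝ)+1)+1) - gg x ((k:ℝ)+1))
      = gg x ((N:ℝ)+1) - gg x 1 := by
    have h := Finset.sum_range_sub (fun k : ℕ => gg x ((k:ℝ)+1)) N
    have he : ∑ k ∈ Finset.range N, (gg x (((k:ℝ)+1)+1) - gg x ((k:ℝ)+1))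
        = ∑ k ∈ Finset.range N,
            ((fun k : ℕ => gg x ((k:ℝ)+1)) (k+1) - (fun k : ℕ => gg x ((k:ℝ)+1)) k) := by
      apply Finset.sum_congr rfl
      intro k _
      simp only []
      congr 2
      push_cast; ring
    rw [he, h]
    norm_num
  rw [htel]
  -- split PS sums
  have hsplit2 : ∑ k ∈ Finset.range N,
        (π * Real.sqrt x * ((∫ t in ((k:ℝ)+1)..(((k:ℝ)+1)+1), q2 x ((k:ℝ)+1) t)
          + (1/2) * ∫ t in ((k:ℝ)+1)..(((k:ℝ)+1)+1), s1 x t))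
      = π * Real.sqrt x
          * (∑ k ∈ Finset.range N, ∫ t in ((k:ℝ)+1)..(((k:ℝ)+1)+1), q2 x ((k:ℝ)+1) t)
        + π * Real.sqrt x / 2
          * (∑ k ∈ Finset.range N, ∫ t in ((k:ℝ)+1)..(((k:ℝ)+1)+1), s1 x t) := by
    rw [Finset.mul_sum, Finset.mul_sum, ← Finset.sum_add_distrib]
    apply Finset.sum_congr rfl
    intro k _
    ring
  rw [hsplit2]
  -- name the three sums
  set Aq := ∑ k ∈ Finset.range N, ∫ t in ((k:ℝ)+1)..(((k:ℝ)+1)+1), q2 x ((k:ℝ)+1) t with hAq_def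
  set As := ∑ k ∈ Finset.range N, ∫ t in ((k:ℝ)+1)..(((k:ℝ)+1)+1), s1 x t with hAs_def
  set Ap := ∑ k ∈ Finset.range N, ∫ t in ((k:ℝ)+1)..(((k:ℝ)+1)+1), p3 x ((k:ℝ)+1) t with hAp_def
  -- telescoping bounds
  have hT2 : ∑ k ∈ Finset.range N,
      (2 / Real.sqrt ((k:ℝ)+1) - 2 / Real.sqrt (((k:ℝ)+1)+1)) ≤ 2 := by
    have h := Finset.sum_range_sub (fun k : ℕ => -(2 / Real.sqrt ((k:ℝ)+1))) N
    have he : ∑ k ∈ Finset.range N,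
        (2 / Real.sqrt ((k:ℝ)+1) - 2 / Real.sqrt (((k:ℝ)+1)+1))
        = ∑ k ∈ Finset.range N, ((fun k : ℕ => -(2 / Real.sqrt ((k:ℝ)+1))) (k+1)
            - (fun k : ℕ => -(2 / Real.sqrt ((k:ℝ)+1))) k) := by
      apply Finset.sum_congr rfl
      intro k _
      simp only []
      have : ((k:ℝ)+1)+1 = ((k+1 : ℕ) : ℝ) + 1 := by push_cast; ring
      rw [this]
      ring
    rw [he, h]
    have h0 : (0:ℝ) ≤ 2 / Real.sqrt ((N:ℝ)+1) := by positivity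
    norm_num
    linarith
  have hT1 : ∑ k ∈ Finset.range N, (1 / ((k:ℝ)+1) - 1 / (((k:ℝ)+1)+1)) ≤ 1 := by
    have h := Finset.sum_range_sub (fun k : ℕ => -(1 / ((k:ℝ)+1))) N
    have he : ∑ k ∈ Finset.range N, (1 / ((k:ℝ)+1) - 1 / (((k:ℝ)+1)+1))
        = ∑ k ∈ Finset.range N, ((fun k : ℕ => -(1 / ((k:ℝ)+1))) (k+1)
            - (fun k : ℕ => -(1 / ((k:ℝ)+1))) k) := by
      apply Finset.sum_congr rfl
      intro k _
      simp only []
      have : ((k:ℝ)+1)+1 = ((k+1 : ℕ) : ℝ) + 1 := by push_cast; ring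
      rw [this]
      ring
    rw [he, h]
    have h0 : (0:ℝ) ≤ 1 / ((N:ℝ)+1) := by positivity
    norm_num
    linarith
  -- bound Aq
  have hAq : |Aq| ≤ π * Real.sqrt x / 4 + 1 / 8 := by
    calc |Aq| ≤ ∑ k ∈ Finset.range N,
          |∫ t in ((k:ℝ)+1)..(((k:ℝ)+1)+1), q2 x ((k:ℝ)+1) t| :=
        Finset.abs_sum_le_sum_abs _ _
      _ ≤ ∑ k ∈ Finset.range N,
          (π * Real.sqrt x / 8 * (2 / Real.sqrt ((k:ℝ)+1) - 2 / Real.sqrt (((k:ℝ)+1)+1))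
            + 1/8 * (1 / ((k:ℝ)+1) - 1 / (((k:ℝ)+1)+1))) := by
          apply Finset.sum_le_sum
          intro k _
          have hc : (0:ℝ) < (k:ℝ)+1 := by positivity
          rw [I2_eq hx0 hc]
          calc |(∫ t in ((k:ℝ)+1)..(((k:ℝ)+1)+1), w2 x ((k:ℝ)+1) t)
                - ∫ t in ((k:ℝ)+1)..(((k:ℝ)+1)+1), w1 x ((k:ℝ)+1) t|
              ≤ |∫ t in ((k:ℝ)+1)..(((k:ℝ)+1)+1), w2 x ((k:ℝ)+1) t|
                + |∫ t in ((k:ℝ)+1)..(((k:ℝ)+1)+1), w1 x ((k:ℝ)+1) t| := abs_sub _ _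
            _ ≤ 1/8 * (1 / ((k:ℝ)+1) - 1 / (((k:ℝ)+1)+1))
                + π * Real.sqrt x / 8
                  * (2 / Real.sqrt ((k:ℝ)+1) - 2 / Real.sqrt (((k:ℝ)+1)+1)) := by
                have := abs_w2_int x hc
                have := abs_w1_int hx0 hc
                linarith
            _ = _ := by ring
      _ = π * Real.sqrt x / 8
            * (∑ k ∈ Finset.range N,
              (2 / Real.sqrt ((k:ℝ)+1) - 2 / Real.sqrt (((k:ℝ)+1)+1)))
          + 1/8 * (∑ k ∈ Finset.range N, (1 / ((k:ℝ)+1) - 1 / (((k:ℝ)+1)+1))) := by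
          rw [Finset.sum_add_distrib, Finset.mul_sum, Finset.mul_sum]
      _ ≤ π * Real.sqrt x / 8 * 2 + 1/8 * 1 := by
          have h1 : (0:ℝ) ≤ π * Real.sqrt x / 8 := by positivity
          nlinarith [hT1, hT2]
      _ = π * Real.sqrt x / 4 + 1/8 := by ring
  -- bound As
  have hAs2 : As = ∫ t in (1:ℝ)..((N:ℝ)+1), s1 x t := by
    have hadj := intervalIntegral.sum_integral_adjacent_intervals
      (a := fun k : ℕ => (k:ℝ)+1) (f := s1 x) (μ := volume) (n := N)
      (fun k _ => II_s1 x (by positivity) (by positivity))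
    simp only [Nat.cast_zero, zero_add, Nat.cast_add, Nat.cast_one] at hadj
    rw [hAs_def]
    exact hadj
  have hAs : |As| ≤ 3 / (π * Real.sqrt x) := by
    rw [hAs2]; exact abs_s1_int hx hN1
  -- bound Ap
  have hAp : |Ap| ≤ 1 := by
    calc |Ap| ≤ ∑ k ∈ Finset.range N,
          |∫ t in ((k:ℝ)+1)..(((k:ℝ)+1)+1), p3 x ((k:ℝ)+1) t| :=
        Finset.abs_sum_le_sum_abs _ _
      _ ≤ ∑ k ∈ Finset.range N,
          (1/2 * (2 / Real.sqrt ((k:ℝ)+1) - 2 / Real.sqrt (((k:ℝ)+1)+1))) := by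
          apply Finset.sum_le_sum
          intro k _
          exact abs_p3_int x (by positivity)
      _ = 1/2 * ∑ k ∈ Finset.range N,
          (2 / Real.sqrt ((k:ℝ)+1) - 2 / Real.sqrt (((k:ℝ)+1)+1)) := by
          rw [Finset.mul_sum]
      _ ≤ 1/2 * 2 := by linarith [hT2]
      _ = 1 := by norm_num
  -- endpoint bounds
  have hff1 : |ff x 1| ≤ 1 := by
    unfold ff
    rw [Real.sqrt_one]
    simpa using Real.abs_cos_le_one (th x 1)
  have hgg1 := abs_gg_le hx0 (1:ℝ)
  have hggN := abs_gg_le hx0 ((N:ℝ)+1)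
  have hinv : 1 / (π * Real.sqrt x) ≤ 1 := by
    rw [div_le_one hPS0]; exact hPS1
  -- final triangle inequality
  have habs1 : |gg x ((N:ℝ)+1) - gg x 1
      - (π * Real.sqrt x * Aq + π * Real.sqrt x / 2 * As) - Ap + ff x 1|
      ≤ |gg x ((N:ℝ)+1)| + |gg x 1| + π * Real.sqrt x * |Aq|
        + π * Real.sqrt x / 2 * |As| + |Ap| + |ff x 1| := by
    have e1 : π * Real.sqrt x * |Aq| = |π * Real.sqrt x * Aq| := by
      rw [abs_mul, abs_of_pos hPS0]
    have e2 : π * Real.sqrt x / 2 * |As| = |π * Real.sqrt x / 2 * As| := by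
      rw [abs_mul, abs_of_pos (by linarith : (0:ℝ) < π * Real.sqrt x / 2)]
    rw [e1, e2]
    calc |gg x ((N:ℝ)+1) - gg x 1
        - (π * Real.sqrt x * Aq + π * Real.sqrt x / 2 * As) - Ap + ff x 1|
        ≤ |gg x ((N:ℝ)+1) - gg x 1
          - (π * Real.sqrt x * Aq + π * Real.sqrt x / 2 * As) - Ap| + |ff x 1| := abs_add_le _ _
      _ ≤ |gg x ((N:ℝ)+1) - gg x 1
          - (π * Real.sqrt x * Aq + π * Real.sqrt x / 2 * As)| + |Ap| + |ff x 1| := by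
          linarith [abs_sub (gg x ((N:ℝ)+1) - gg x 1
            - (π * Real.sqrt x * Aq + π * Real.sqrt x / 2 * As)) Ap]
      _ ≤ |gg x ((N:ℝ)+1) - gg x 1| + |π * Real.sqrt x * Aq + π * Real.sqrt x / 2 * As|
          + |Ap| + |ff x 1| := by
          linarith [abs_sub (gg x ((N:ℝ)+1) - gg x 1)
            (π * Real.sqrt x * Aq + π * Real.sqrt x / 2 * As)]
      _ ≤ |gg x ((N:ℝ)+1)| + |gg x 1| + (|π * Real.sqrt x * Aq| + |π * Real.sqrt x / 2 * As|)
          + |Ap| + |ff x 1| := by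
          linarith [abs_sub (gg x ((N:ℝ)+1)) (gg x 1),
            abs_add_le (π * Real.sqrt x * Aq) (π * Real.sqrt x / 2 * As)]
      _ = _ := by ring
  refine habs1.trans ?_
  have hq : π * Real.sqrt x * |Aq| ≤ π * Real.sqrt x * (π * Real.sqrt x / 4 + 1/8) :=
    mul_le_mul_of_nonneg_left hAq (by positivity)
  have hs : π * Real.sqrt x / 2 * |As| ≤ π * Real.sqrt x / 2 * (3 / (π * Real.sqrt x)) :=
    mul_le_mul_of_nonneg_left hAs (by positivity)
  have hs' : π * Real.sqrt x / 2 * (3 / (π * Real.sqrt x)) = 3/2 := by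
    field_simp
  rw [hs'] at hs
  have hsq : π * Real.sqrt x * 1 ≤ π * Real.sqrt x * (π * Real.sqrt x) :=
    mul_le_mul_of_nonneg_left hPS1 (by positivity)
  nlinarith [hq, hs, hPS1, hggN, hgg1, hinv, hff1, hAp, hsq]
end

section
/- For every ε > 0 and every real x ≥ 1, the series Σ_{n=1}^{∞} cos(2π√(nx) + π/4)/n^{(1+ε)/2} converges. -/
open Real

noncomputable def phiF (x t : ℝ) : ℝ := 2 * π * (Real.sqrt t * Real.sqrt x) + π / 4
noncomputable def hF (x s t : ℝ) : ℝ :=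
  Real.sin (phiF x t) * t ^ ((1:ℝ)/2 - s) / (π * Real.sqrt x)
noncomputable def gF (x s t : ℝ) : ℝ := Real.cos (phiF x t) * t ^ (-s)
noncomputable def rF (x s t : ℝ) : ℝ :=
  Real.sin (phiF x t) * ((1/2 - s) * t ^ (-(1:ℝ)/2 - s)) / (π * Real.sqrt x)
noncomputable def gdF (x s t : ℝ) : ℝ :=
  -Real.sin (phiF x t) * (π * Real.sqrt x / Real.sqrt t) * t ^ (-s)
    + Real.cos (phiF x t) * (-s * t ^ (-s - 1))

lemma phiF_hasDeriv (x : ℝ) {t : ℝ} (ht : 0 < t) :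
    HasDerivAt (phiF x) (π * Real.sqrt x / Real.sqrt t) t := by
  have h1 : HasDerivAt Real.sqrt (1 / (2 * Real.sqrt t)) t := Real.hasDerivAt_sqrt ht.ne'
  have h2 := ((h1.mul_const (Real.sqrt x)).const_mul (2 * π)).add_const (π / 4)
  refine h2.congr_deriv ?_
  have : Real.sqrt t ≠ 0 := by positivity
  field_simp

lemma hF_hasDeriv {x : ℝ} (hx : 1 ≤ x) (s : ℝ) {t : ℝ} (ht : 0 < t) :
    HasDerivAt (hF x s) (gF x s t + rF x s t) t := by
  have hx0 : (0:ℝ) < x := lt_of_lt_of_le one_pos hx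
  have hc : (0:ℝ) < π * Real.sqrt x := by positivity
  have hst : Real.sqrt t ≠ 0 := by positivity
  have hpow : HasDerivAt (fun u : ℝ => u ^ ((1:ℝ)/2 - s))
      (((1:ℝ)/2 - s) * t ^ ((1:ℝ)/2 - s - 1)) t :=
    Real.hasDerivAt_rpow_const (Or.inl ht.ne')
  have hsin : HasDerivAt (fun u => Real.sin (phiF x u))
      (Real.cos (phiF x t) * (π * Real.sqrt x / Real.sqrt t)) t :=
    (phiF_hasDeriv x ht).sin
  have hmain := (hsin.mul hpow).div_const (π * Real.sqrt x)
  refine hmain.congr_deriv ?_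
  have e1 : t ^ ((1:ℝ)/2 - s - 1) = t ^ (-(1:ℝ)/2 - s) := by ring_nf
  have e2 : t ^ ((1:ℝ)/2 - s) = Real.sqrt t * t ^ (-s) := by
    rw [show (1:ℝ)/2 - s = 1/2 + (-s) by ring, Real.rpow_add ht, Real.sqrt_eq_rpow]
  simp only [gF, rF]
  rw [e1, e2]
  field_simp

lemma gF_hasDeriv {x : ℝ} (hx : 1 ≤ x) (s : ℝ) {t : ℝ} (ht : 0 < t) :
    HasDerivAt (gF x s) (gdF x s t) t := by
  have hcos : HasDerivAt (fun u => Real.cos (phiF x u))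
      (-Real.sin (phiF x t) * (π * Real.sqrt x / Real.sqrt t)) t :=
    (phiF_hasDeriv x ht).cos
  have hpow : HasDerivAt (fun u : ℝ => u ^ (-s)) (-s * t ^ (-s - 1)) t :=
    Real.hasDerivAt_rpow_const (Or.inl ht.ne')
  have := hcos.mul hpow
  exact this

lemma gdF_bound (x s : ℝ) (hx : 1 ≤ x) (hs : 0 ≤ s) {a t : ℝ} (ha : 1 ≤ a) (hat : a ≤ t) :
    |gdF x s t| ≤ (π * Real.sqrt x + s) * a ^ (-(1:ℝ)/2 - s) := by
  have hx0 : (0:ℝ) < x := lt_of_lt_of_le one_pos hx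
  have ha0 : (0:ℝ) < a := lt_of_lt_of_le one_pos ha
  have ht0 : (0:ℝ) < t := lt_of_lt_of_le ha0 hat
  have ht1 : (1:ℝ) ≤ t := le_trans ha hat
  have hc : (0:ℝ) < π * Real.sqrt x := by positivity
  have key : t ^ (-(1:ℝ)/2 - s) ≤ a ^ (-(1:ℝ)/2 - s) :=
    Real.rpow_le_rpow_of_nonpos ha0 hat (by linarith [hs])
  have e1 : π * Real.sqrt x / Real.sqrt t * t ^ (-s)
      = (π * Real.sqrt x) * t ^ (-(1:ℝ)/2 - s) := by
    rw [Real.sqrt_eq_rpow t, show -(1:ℝ)/2 - s = -s - 1/2 by ring, Real.rpow_sub ht0]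
    ring
  have e3 : t ^ (-s - 1) ≤ t ^ (-(1:ℝ)/2 - s) :=
    Real.rpow_le_rpow_of_exponent_le ht1 (by linarith)
  have hb1 : |(-Real.sin (phiF x t)) * (π * Real.sqrt x / Real.sqrt t) * t ^ (-s)|
      ≤ (π * Real.sqrt x) * t ^ (-(1:ℝ)/2 - s) := by
    rw [mul_assoc, abs_mul, abs_neg]
    have hz : |π * Real.sqrt x / Real.sqrt t * t ^ (-s)|
        = (π * Real.sqrt x) * t ^ (-(1:ℝ)/2 - s) := by
      rw [abs_of_nonneg (by positivity), e1]
    rw [hz]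
    exact mul_le_of_le_one_left (by positivity) (Real.abs_sin_le_one _)
  have hb2 : |Real.cos (phiF x t) * (-s * t ^ (-s - 1))| ≤ s * t ^ (-(1:ℝ)/2 - s) := by
    rw [abs_mul, abs_mul, abs_neg, abs_of_nonneg hs, abs_of_nonneg (Real.rpow_nonneg ht0.le _)]
    calc |Real.cos (phiF x t)| * (s * t ^ (-s - 1)) ≤ 1 * (s * t ^ (-s - 1)) := by
          apply mul_le_mul_of_nonneg_right (Real.abs_cos_le_one _) (by positivity)
      _ = s * t ^ (-s - 1) := by ring
      _ ≤ s * t ^ (-(1:ℝ)/2 - s) := mul_le_mul_of_nonneg_left e3 hs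
  calc |gdF x s t| ≤ (π * Real.sqrt x) * t ^ (-(1:ℝ)/2 - s) + s * t ^ (-(1:ℝ)/2 - s) :=
        le_trans (abs_add_le _ _) (add_le_add hb1 hb2)
    _ = (π * Real.sqrt x + s) * t ^ (-(1:ℝ)/2 - s) := by ring
    _ ≤ (π * Real.sqrt x + s) * a ^ (-(1:ℝ)/2 - s) :=
        mul_le_mul_of_nonneg_left key (by positivity)

lemma step_bound (x s : ℝ) (hx : 1 ≤ x) (hs : 1/2 ≤ s) {a : ℝ} (ha : 1 ≤ a) :
    |gF x s a - (hF x s (a+1) - hF x s a)|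
      ≤ (π * Real.sqrt x + s + (s - 1/2) / (π * Real.sqrt x)) * a ^ (-(1:ℝ)/2 - s) := by
  have hx0 : (0:ℝ) < x := lt_of_lt_of_le one_pos hx
  have ha0 : (0:ℝ) < a := lt_of_lt_of_le one_pos ha
  have hc : (0:ℝ) < π * Real.sqrt x := by positivity
  have hab : a < a + 1 := by linarith
  have hposIcc : ∀ u ∈ Set.Icc a (a+1), (0:ℝ) < u := fun u hu => lt_of_lt_of_le ha0 hu.1
  have hcont : ContinuousOn (hF x s) (Set.Icc a (a+1)) := fun u hu =>
    ((hF_hasDeriv hx s (hposIcc u hu)).continuousAt).continuousWithinAt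
  obtain ⟨ξ, hξ, hslope⟩ := exists_hasDerivAt_eq_slope (hF x s)
    (fun u => gF x s u + rF x s u) hab hcont
    (fun u hu => hF_hasDeriv hx s (lt_of_lt_of_le ha0 hu.1.le))
  have hsimp : hF x s (a+1) - hF x s a = gF x s ξ + rF x s ξ := by
    rw [hslope]; simp
  have hξa : a ≤ ξ := hξ.1.le
  have hξ1 : ξ - a ≤ 1 := by have := hξ.2; linarith
  -- Lipschitz bound for gF on [a, a+1]
  have hlip : ‖gF x s ξ - gF x s a‖ ≤ ((π * Real.sqrt x + s) * a ^ (-(1:ℝ)/2 - s)) * ‖ξ - a‖ := by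
    apply Convex.norm_image_sub_le_of_norm_hasDerivWithin_le
      (f' := gdF x s)
      (fun u hu => (gF_hasDeriv hx s (hposIcc u hu)).hasDerivWithinAt)
      (fun u hu => by rw [Real.norm_eq_abs]; exact gdF_bound x s hx (by linarith) ha hu.1)
      (convex_Icc a (a+1)) ⟨le_refl a, by linarith⟩ ⟨hξa, hξ.2.le⟩
  have hlip' : |gF x s ξ - gF x s a| ≤ (π * Real.sqrt x + s) * a ^ (-(1:ℝ)/2 - s) := by
    rw [Real.norm_eq_abs, Real.norm_eq_abs] at hlip
    calc |gF x s ξ - gF x s a| ≤ ((π * Real.sqrt x + s) * a ^ (-(1:ℝ)/2 - s)) * |ξ - a| := hlip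
      _ ≤ ((π * Real.sqrt x + s) * a ^ (-(1:ℝ)/2 - s)) * 1 := by
          apply mul_le_mul_of_nonneg_left _ (by positivity)
          rw [abs_of_nonneg (by linarith)]; exact hξ1
      _ = (π * Real.sqrt x + s) * a ^ (-(1:ℝ)/2 - s) := mul_one _
  have hrb : |rF x s ξ| ≤ (s - 1/2) / (π * Real.sqrt x) * a ^ (-(1:ℝ)/2 - s) := by
    have hξ0 : (0:ℝ) < ξ := lt_of_lt_of_le ha0 hξa
    have key : ξ ^ (-(1:ℝ)/2 - s) ≤ a ^ (-(1:ℝ)/2 - s) :=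
      Real.rpow_le_rpow_of_nonpos ha0 hξa (by linarith)
    simp only [rF]
    rw [abs_div, abs_mul, abs_mul, abs_of_nonneg hc.le,
      abs_of_nonneg (Real.rpow_nonneg hξ0.le _), abs_of_nonpos (by linarith : (1:ℝ)/2 - s ≤ 0)]
    rw [div_mul_eq_mul_div]
    gcongr (?_ : ℝ) / _
    nlinarith [Real.abs_sin_le_one (phiF x ξ), Real.rpow_nonneg hξ0.le (-(1:ℝ)/2 - s),
      Real.rpow_nonneg ha0.le (-(1:ℝ)/2 - s),
      mul_le_mul_of_nonneg_left key (by linarith : (0:ℝ) ≤ s - 1/2),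
      mul_le_mul_of_nonneg_right (Real.abs_sin_le_one (phiF x ξ))
        (mul_nonneg (by linarith : (0:ℝ) ≤ s - 1/2) (Real.rpow_nonneg hξ0.le (-(1:ℝ)/2 - s)))]
  calc |gF x s a - (hF x s (a+1) - hF x s a)| = |(gF x s a - gF x s ξ) - rF x s ξ| := by
        rw [hsimp]; ring_nf
    _ ≤ |gF x s a - gF x s ξ| + |rF x s ξ| := abs_sub _ _
    _ ≤ (π * Real.sqrt x + s) * a ^ (-(1:ℝ)/2 - s)
        + (s - 1/2) / (π * Real.sqrt x) * a ^ (-(1:ℝ)/2 - s) := by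
          rw [abs_sub_comm]
          exact add_le_add hlip' hrb
    _ = (π * Real.sqrt x + s + (s - 1/2) / (π * Real.sqrt x)) * a ^ (-(1:ℝ)/2 - s) := by ring

theorem series_converges_eps (ε : ℝ) (hε : 0 < ε) (x : ℝ) (hx : 1 ≤ x) :
    ∃ L : ℝ, Filter.Tendsto
      (fun M : ℕ => ∑ n ∈ Finset.Icc 1 M,
        cos (2 * π * Real.sqrt (n * x) + π / 4) / (n : ℝ) ^ ((1 + ε) / 2))
      Filter.atTop (nhds L) := by
  have hx0 : (0:ℝ) < x := lt_of_lt_of_le one_pos hx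
  have hc : (0:ℝ) < π * Real.sqrt x := by positivity
  set s : ℝ := (1 + ε) / 2 with hs_def
  have hs2 : (1:ℝ)/2 < s := by rw [hs_def]; linarith
  set e : ℕ → ℝ := fun i =>
    gF x s ((i:ℝ)+1) - (hF x s (((i:ℝ)+1)+1) - hF x s ((i:ℝ)+1)) with he
  have hbound : ∀ i : ℕ, ‖e i‖ ≤ (π * Real.sqrt x + s + (s - 1/2) / (π * Real.sqrt x))
      * ((i:ℝ)+1) ^ (-(1:ℝ)/2 - s) := by
    intro i
    have h1 : (1:ℝ) ≤ (i:ℝ)+1 := by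
      have := Nat.cast_nonneg (α := ℝ) i; linarith
    rw [Real.norm_eq_abs, he]
    exact step_bound x s hx hs2.le h1
  have hmaj : Summable (fun i : ℕ =>
      (π * Real.sqrt x + s + (s - 1/2) / (π * Real.sqrt x)) * ((i:ℝ)+1) ^ (-(1:ℝ)/2 - s)) := by
    have h0 : Summable (fun n : ℕ => (n:ℝ) ^ (-(1:ℝ)/2 - s)) :=
      Real.summable_nat_rpow.2 (by linarith)
    have h1 := (summable_nat_add_iff 1).2 h0
    have h2 := h1.mul_left (π * Real.sqrt x + s + (s - 1/2) / (π * Real.sqrt x))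
    refine h2.congr fun i => ?_
    push_cast
    ring_nf
  have hsum : Summable e := Summable.of_norm_bounded hmaj hbound
  have hpart : Filter.Tendsto (fun M : ℕ => ∑ i ∈ Finset.range M, e i)
      Filter.atTop (nhds (∑' i, e i)) := hsum.hasSum.tendsto_sum_nat
  have hH0 : Filter.Tendsto (fun M : ℕ => hF x s ((M:ℝ)+1)) Filter.atTop (nhds 0) := by
    refine squeeze_zero_norm (a := fun M : ℕ => ((M:ℝ)+1) ^ (-(ε/2)) / (π * Real.sqrt x)) (fun M => ?_) ?_
    ·
      have h0 : (0:ℝ) ≤ (M:ℝ) := Nat.cast_nonneg M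
      have hMp : (0:ℝ) < (M:ℝ)+1 := by linarith
      rw [Real.norm_eq_abs]
      simp only [hF]
      rw [abs_div, abs_mul, abs_of_nonneg hc.le,
        abs_of_nonneg (Real.rpow_nonneg hMp.le _),
        show (1:ℝ)/2 - s = -(ε/2) by rw [hs_def]; ring]
      gcongr (?_ : ℝ) / _
      exact mul_le_of_le_one_left (Real.rpow_nonneg hMp.le _) (Real.abs_sin_le_one _)
    · have h2 : Filter.Tendsto (fun M : ℕ => ((M:ℝ)+1)) Filter.atTop Filter.atTop :=
        Filter.tendsto_atTop_add_const_right _ 1 tendsto_natCast_atTop_atTop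
      have h3 := ((tendsto_rpow_neg_atTop (by linarith : (0:ℝ) < ε/2)).comp h2).div_const (π * Real.sqrt x)
      simpa using h3
  have hident : ∀ M : ℕ, ∑ n ∈ Finset.Icc 1 M,
      Real.cos (2 * π * Real.sqrt (n * x) + π / 4) / (n : ℝ) ^ s
      = (∑ i ∈ Finset.range M, e i) + (hF x s ((M:ℝ)+1) - hF x s ((0:ℝ)+1)) := by
    intro M
    rw [← Finset.Ico_add_one_right_eq_Icc, Finset.sum_Ico_eq_sum_range]
    simp only [Nat.add_sub_cancel]
    calc ∑ i ∈ Finset.range M,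
        Real.cos (2 * π * Real.sqrt ((↑(1+i) : ℝ) * x) + π / 4) / ((1+i : ℕ) : ℝ) ^ s
        = ∑ i ∈ Finset.range M,
          (e i + (hF x s ((↑(i+1) : ℝ)+1) - hF x s ((i:ℝ)+1))) := by
          refine Finset.sum_congr rfl fun i _ => ?_
          have hip : (0:ℝ) < (i:ℝ)+1 := by
            have := Nat.cast_nonneg (α := ℝ) i; linarith
          have hcast : ((1+i : ℕ) : ℝ) = (i:ℝ)+1 := by push_cast; ring
          rw [hcast]
          have hterm : Real.cos (2 * π * Real.sqrt (((i:ℝ)+1) * x) + π / 4) / ((i:ℝ)+1) ^ s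
              = gF x s ((i:ℝ)+1) := by
            rw [Real.sqrt_mul hip.le, gF, phiF, Real.rpow_neg hip.le, div_eq_mul_inv]
          have hcast2 : ((i+1 : ℕ) : ℝ) = (i:ℝ)+1 := by push_cast; ring
          rw [hterm, hcast2, he]
          ring
      _ = (∑ i ∈ Finset.range M, e i)
          + (hF x s ((M:ℝ)+1) - hF x s ((0:ℝ)+1)) := by
          rw [Finset.sum_add_distrib,
            Finset.sum_range_sub (fun i : ℕ => hF x s ((i:ℝ)+1))]
          norm_num
  refine ⟨(∑' i, e i) + (0 - hF x s ((0:ℝ)+1)), ?_⟩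
  have hfin := hpart.add (hH0.sub (tendsto_const_nhds (x := hF x s ((0:ℝ)+1))))
  exact hfin.congr fun M => (hident M).symm
end

section
/- For every 0 < δ < 1/4 and every x > 0, the series Σ_{n=1}^{∞} cos(2π√(nx) + π/4)/n^{3/4−δ} converges. -/
open Real Filter

noncomputable def Faux (c p t : ℝ) : ℝ := (2 / c) * Real.sin (c * Real.sqrt t + π / 4) * t ^ p

noncomputable def Gaux (c p t : ℝ) : ℝ :=
  Real.cos (c * Real.sqrt t + π / 4) * t ^ (p - 1 / 2)
    + (2 * p / c) * Real.sin (c * Real.sqrt t + π / 4) * t ^ (p - 1)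

lemma Faux_deriv {c p t : ℝ} (hc : 0 < c) (ht : 0 < t) :
    HasDerivAt (Faux c p) (Gaux c p t) t := by
  have hs : HasDerivAt Real.sqrt (1 / (2 * Real.sqrt t)) t := Real.hasDerivAt_sqrt ht.ne'
  have h1 : HasDerivAt (fun u : ℝ => c * Real.sqrt u + π / 4) (c * (1 / (2 * Real.sqrt t))) t :=
    (hs.const_mul c).add_const _
  have h2 : HasDerivAt (fun u : ℝ => Real.sin (c * Real.sqrt u + π / 4))
      (Real.cos (c * Real.sqrt t + π / 4) * (c * (1 / (2 * Real.sqrt t)))) t := h1.sin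
  have h3 : HasDerivAt (fun u : ℝ => u ^ p) (p * t ^ (p - 1)) t :=
    Real.hasDerivAt_rpow_const (Or.inl ht.ne')
  have h4 := (h2.const_mul (2 / c)).mul h3
  have h5 : HasDerivAt (Faux c p)
      ((2 / c) * (Real.cos (c * Real.sqrt t + π / 4) * (c * (1 / (2 * Real.sqrt t)))) * t ^ p
        + (2 / c) * Real.sin (c * Real.sqrt t + π / 4) * (p * t ^ (p - 1))) t := by
    exact h4
  convert h5 using 1
  have hsq : Real.sqrt t = t ^ (1 / 2 : ℝ) := Real.sqrt_eq_rpow t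
  have hsub : t ^ (p - 1 / 2 : ℝ) = t ^ p / t ^ (1 / 2 : ℝ) := Real.rpow_sub ht _ _
  have hne : t ^ (1 / 2 : ℝ) ≠ 0 := (Real.rpow_pos_of_pos ht _).ne'
  unfold Gaux
  rw [hsub, hsq]
  field_simp

lemma sqrt_add_one_le {n : ℝ} (hn : 1 ≤ n) {t : ℝ} (ht : t ≤ n + 1) :
    Real.sqrt t ≤ Real.sqrt n + 1 / (2 * Real.sqrt n) := by
  have hn0 : 0 < n := by linarith
  have hsn : 0 < Real.sqrt n := Real.sqrt_pos.mpr hn0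
  have h1 : Real.sqrt n ^ 2 = n := Real.sq_sqrt hn0.le
  have h2 : Real.sqrt n + 1 / (2 * Real.sqrt n)
      = Real.sqrt ((Real.sqrt n + 1 / (2 * Real.sqrt n)) ^ 2) :=
    (Real.sqrt_sq (by positivity)).symm
  rw [h2]
  apply Real.sqrt_le_sqrt
  have e1 : Real.sqrt n * (1 / (2 * Real.sqrt n)) = 1 / 2 := by field_simp
  have e2 : (1 / (2 * Real.sqrt n)) ^ 2 = 1 / (4 * n) := by
    rw [div_pow, mul_pow, h1]; norm_num
  have h3 : (Real.sqrt n + 1 / (2 * Real.sqrt n)) ^ 2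
      = n + 1 + 1 / (4 * n) := by
    have e0 : (Real.sqrt n + 1 / (2 * Real.sqrt n)) ^ 2
        = Real.sqrt n ^ 2 + 2 * (Real.sqrt n * (1 / (2 * Real.sqrt n)))
          + (1 / (2 * Real.sqrt n)) ^ 2 := by ring
    rw [e0, h1, e1, e2]; ring
  rw [h3]
  have : 0 < 1 / (4 * n) := by positivity
  linarith

lemma abs_cos_sub_cos_le (a b : ℝ) : |Real.cos a - Real.cos b| ≤ |a - b| := by
  rw [Real.cos_sub_cos]
  have h1 : |Real.sin ((a + b) / 2)| ≤ 1 := Real.abs_sin_le_one _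
  have h2 : |Real.sin ((a - b) / 2)| ≤ |(a - b) / 2| := Real.abs_sin_le_abs
  calc |(-2) * Real.sin ((a + b) / 2) * Real.sin ((a - b) / 2)|
      = 2 * |Real.sin ((a + b) / 2)| * |Real.sin ((a - b) / 2)| := by
        rw [abs_mul, abs_mul]; simp [abs_of_nonneg]
    _ ≤ 2 * 1 * |(a - b) / 2| := by
        apply mul_le_mul _ h2 (abs_nonneg _) (by positivity)
        nlinarith [h1, abs_nonneg (Real.sin ((a + b) / 2))]
    _ = |a - b| := by rw [abs_div]; simp; ring

lemma keybound {c p : ℝ} (hc : 0 < c) (hp0 : p < 0) (hp1 : -1 ≤ p)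
    {n t : ℝ} (hn : 1 ≤ n) (ht1 : n ≤ t) (ht2 : t ≤ n + 1) :
    |Gaux c p t - Real.cos (c * Real.sqrt n + π / 4) * n ^ (p - 1 / 2)|
      ≤ (c / 2 + 2 / c) * n ^ (p - 1) + (n ^ (p - 1 / 2) - (n + 1) ^ (p - 1 / 2)) := by
  have hn0 : 0 < n := by linarith
  have ht0 : 0 < t := by linarith
  have hsn : 0 < Real.sqrt n := Real.sqrt_pos.mpr hn0
  set A := c * Real.sqrt t + π / 4 with hA
  set B := c * Real.sqrt n + π / 4 with hB
  have hdecomp : Gaux c p t - Real.cos B * n ^ (p - 1 / 2)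
      = (Real.cos A - Real.cos B) * t ^ (p - 1 / 2)
        + Real.cos B * (t ^ (p - 1 / 2) - n ^ (p - 1 / 2))
        + (2 * p / c) * Real.sin A * t ^ (p - 1) := by
    unfold Gaux; ring
  rw [hdecomp]
  -- basic rpow facts
  have htp : t ^ (p - 1 / 2 : ℝ) ≤ n ^ (p - 1 / 2 : ℝ) :=
    Real.rpow_le_rpow_of_nonpos hn0 ht1 (by linarith)
  have htp2 : (n + 1 : ℝ) ^ (p - 1 / 2 : ℝ) ≤ t ^ (p - 1 / 2 : ℝ) :=
    Real.rpow_le_rpow_of_nonpos ht0 ht2 (by linarith)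
  have htp1 : t ^ (p - 1 : ℝ) ≤ n ^ (p - 1 : ℝ) :=
    Real.rpow_le_rpow_of_nonpos hn0 ht1 (by linarith)
  have htpos : (0:ℝ) ≤ t ^ (p - 1 / 2 : ℝ) := (Real.rpow_pos_of_pos ht0 _).le
  have htpos1 : (0:ℝ) ≤ t ^ (p - 1 : ℝ) := (Real.rpow_pos_of_pos ht0 _).le
  -- term 1
  have hAB : |A - B| ≤ c / (2 * Real.sqrt n) := by
    have h1 : A - B = c * (Real.sqrt t - Real.sqrt n) := by rw [hA, hB]; ring
    have h2 : Real.sqrt n ≤ Real.sqrt t := Real.sqrt_le_sqrt ht1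
    have h3 : Real.sqrt t - Real.sqrt n ≤ 1 / (2 * Real.sqrt n) := by
      have := sqrt_add_one_le hn ht2; linarith
    rw [h1, abs_of_nonneg (by nlinarith)]
    calc c * (Real.sqrt t - Real.sqrt n) ≤ c * (1 / (2 * Real.sqrt n)) := by
          apply mul_le_mul_of_nonneg_left h3 hc.le
      _ = c / (2 * Real.sqrt n) := by ring
  have hrw : (1:ℝ) / Real.sqrt n * n ^ (p - 1 / 2 : ℝ) = n ^ (p - 1 : ℝ) := by
    have hsq : Real.sqrt n = n ^ (1 / 2 : ℝ) := Real.sqrt_eq_rpow n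
    rw [hsq, one_div, ← Real.rpow_neg hn0.le, ← Real.rpow_add hn0]
    congr 1
    ring
  have h1 : |(Real.cos A - Real.cos B) * t ^ (p - 1 / 2 : ℝ)| ≤ (c / 2) * n ^ (p - 1 : ℝ) := by
    rw [abs_mul, abs_of_nonneg htpos]
    calc |Real.cos A - Real.cos B| * t ^ (p - 1 / 2 : ℝ)
        ≤ (c / (2 * Real.sqrt n)) * n ^ (p - 1 / 2 : ℝ) := by
          apply mul_le_mul ((_root_.abs_cos_sub_cos_le A B).trans hAB) htp htpos (by positivity)
      _ = (c / 2) * (1 / Real.sqrt n * n ^ (p - 1 / 2 : ℝ)) := by field_simp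
      _ = (c / 2) * n ^ (p - 1 : ℝ) := by rw [hrw]
  -- term 2
  have h2 : |Real.cos B * (t ^ (p - 1 / 2 : ℝ) - n ^ (p - 1 / 2 : ℝ))|
      ≤ n ^ (p - 1 / 2 : ℝ) - (n + 1) ^ (p - 1 / 2 : ℝ) := by
    rw [abs_mul, abs_of_nonpos (show t ^ (p - 1 / 2 : ℝ) - n ^ (p - 1 / 2 : ℝ) ≤ 0 by linarith),
      neg_sub]
    calc |Real.cos B| * (n ^ (p - 1 / 2 : ℝ) - t ^ (p - 1 / 2 : ℝ))
        ≤ 1 * (n ^ (p - 1 / 2 : ℝ) - t ^ (p - 1 / 2 : ℝ)) := by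
          apply mul_le_mul_of_nonneg_right (Real.abs_cos_le_one B) (by linarith)
      _ ≤ n ^ (p - 1 / 2 : ℝ) - (n + 1) ^ (p - 1 / 2 : ℝ) := by linarith
  -- term 3
  have h3 : |(2 * p / c) * Real.sin A * t ^ (p - 1 : ℝ)| ≤ (2 / c) * n ^ (p - 1 : ℝ) := by
    rw [abs_mul, abs_mul, abs_of_nonneg htpos1]
    have hpabs : |2 * p / c| ≤ 2 / c := by
      rw [abs_div, abs_mul]
      rw [abs_of_pos hc, abs_of_pos (by norm_num : (0:ℝ) < 2), abs_of_neg hp0]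
      apply div_le_div_of_nonneg_right _ hc.le
      nlinarith
    calc |2 * p / c| * |Real.sin A| * t ^ (p - 1 : ℝ)
        ≤ (2 / c) * 1 * n ^ (p - 1 : ℝ) := by
          apply mul_le_mul _ htp1 htpos1 (by positivity)
          apply mul_le_mul hpabs (Real.abs_sin_le_one A) (abs_nonneg _) (by positivity)
      _ = (2 / c) * n ^ (p - 1 : ℝ) := by ring
  calc |(Real.cos A - Real.cos B) * t ^ (p - 1 / 2 : ℝ)
        + Real.cos B * (t ^ (p - 1 / 2 : ℝ) - n ^ (p - 1 / 2 : ℝ))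
        + (2 * p / c) * Real.sin A * t ^ (p - 1 : ℝ)|
      ≤ |(Real.cos A - Real.cos B) * t ^ (p - 1 / 2 : ℝ)
          + Real.cos B * (t ^ (p - 1 / 2 : ℝ) - n ^ (p - 1 / 2 : ℝ))|
        + |(2 * p / c) * Real.sin A * t ^ (p - 1 : ℝ)| := abs_add_le _ _
    _ ≤ |(Real.cos A - Real.cos B) * t ^ (p - 1 / 2 : ℝ)|
        + |Real.cos B * (t ^ (p - 1 / 2 : ℝ) - n ^ (p - 1 / 2 : ℝ))|
        + |(2 * p / c) * Real.sin A * t ^ (p - 1 : ℝ)| := by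
          have := abs_add_le ((Real.cos A - Real.cos B) * t ^ (p - 1 / 2 : ℝ))
            (Real.cos B * (t ^ (p - 1 / 2 : ℝ) - n ^ (p - 1 / 2 : ℝ)))
          linarith
    _ ≤ (c / 2 + 2 / c) * n ^ (p - 1 : ℝ) + (n ^ (p - 1 / 2 : ℝ) - (n + 1) ^ (p - 1 / 2 : ℝ)) := by
          linarith

lemma Gaux_contOn {c p : ℝ} : ContinuousOn (Gaux c p) (Set.Ici (1:ℝ)) := by
  have h0 : ∀ t ∈ Set.Ici (1:ℝ), t ≠ 0 := fun t ht => by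
    simp only [Set.mem_Ici] at ht; linarith
  have hcos : Continuous fun t : ℝ => Real.cos (c * Real.sqrt t + π / 4) := by
    exact Real.continuous_cos.comp ((continuous_const.mul Real.continuous_sqrt).add continuous_const)
  have hsin : Continuous fun t : ℝ => Real.sin (c * Real.sqrt t + π / 4) := by
    exact Real.continuous_sin.comp ((continuous_const.mul Real.continuous_sqrt).add continuous_const)
  have hrp : ∀ q : ℝ, ContinuousOn (fun t : ℝ => t ^ q) (Set.Ici (1:ℝ)) := fun q =>
    fun t ht => (Real.continuousAt_rpow_const t q (Or.inl (h0 t ht))).continuousWithinAt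
  exact ((hcos.continuousOn.mul (hrp _)).add
    ((continuous_const.mul hsin).continuousOn.mul (hrp _)))

theorem series_converges_delta (δ x : ℝ) (hδ : 0 < δ) (hδ' : δ < 1 / 4) (hx : 0 < x) :
    ∃ L : ℝ, Filter.Tendsto
      (fun M : ℕ => ∑ n ∈ Finset.Icc 1 M,
        cos (2 * π * Real.sqrt (n * x) + π / 4) / (n : ℝ) ^ ((3 : ℝ) / 4 - δ))
      Filter.atTop (nhds L) := by
  set c : ℝ := 2 * π * Real.sqrt x with hcdef
  have hc : 0 < c := by
    have := Real.pi_pos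
    have := Real.sqrt_pos.mpr hx
    positivity
  set p : ℝ := δ - 1 / 4 with hpdef
  have hp0 : p < 0 := by simp [hpdef]; linarith
  have hp1 : -1 ≤ p := by simp [hpdef]; linarith
  -- terms of the series, reindexed from 0
  set b : ℕ → ℝ := fun k =>
    Real.cos (c * Real.sqrt ((k:ℝ) + 1) + π / 4) * ((k:ℝ) + 1) ^ (p - 1 / 2) with hbdef
  set E : ℕ → ℝ := fun k => (Faux c p ((k:ℝ) + 2) - Faux c p ((k:ℝ) + 1)) - b k with hEdef
  set Bnd : ℕ → ℝ := fun k => (c / 2 + 2 / c) * ((k:ℝ) + 1) ^ (p - 1)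
    + (((k:ℝ) + 1) ^ (p - 1 / 2) - ((k:ℝ) + 2) ^ (p - 1 / 2)) with hBnddef
  -- each partial sum rewrites
  have hsum_eq : ∀ M : ℕ,
      (∑ n ∈ Finset.Icc 1 M,
        Real.cos (2 * π * Real.sqrt (n * x) + π / 4) / (n : ℝ) ^ ((3 : ℝ) / 4 - δ))
      = ∑ k ∈ Finset.range M, b k := by
    intro M
    rw [← Finset.Ico_add_one_right_eq_Icc, Finset.sum_Ico_eq_sum_range]
    norm_num
    apply Finset.sum_congr rfl
    intro k _
    have hk1 : (0:ℝ) < (k:ℝ) + 1 := by positivity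
    rw [show (1 + (k:ℝ)) = (k:ℝ) + 1 from by ring]
    have hsqrt : Real.sqrt (((k:ℝ) + 1) * x) = Real.sqrt ((k:ℝ) + 1) * Real.sqrt x :=
      Real.sqrt_mul (by positivity) x
    have harg : 2 * π * Real.sqrt (((k:ℝ) + 1) * x) + π / 4
        = c * Real.sqrt ((k:ℝ) + 1) + π / 4 := by rw [hsqrt, hcdef]; ring
    rw [harg]
    simp only [hbdef]
    have hexp : ((k:ℝ) + 1) ^ (p - 1 / 2 : ℝ) = (((k:ℝ) + 1) ^ ((3:ℝ) / 4 - δ))⁻¹ := by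
      rw [show (p - 1 / 2 : ℝ) = -((3:ℝ)/4 - δ) by rw [hpdef]; ring,
        Real.rpow_neg hk1.le]
    rw [hexp, div_eq_mul_inv]
  -- FTC : E k is an integral, bounded by Bnd k
  have hEbound : ∀ k : ℕ, |E k| ≤ Bnd k := by
    intro k
    have h12 : ((k:ℝ) + 1) ≤ (k:ℝ) + 2 := by linarith
    have hpos : ∀ t ∈ Set.uIcc ((k:ℝ) + 1) ((k:ℝ) + 2), (0:ℝ) < t := by
      intro t ht
      rw [Set.uIcc_of_le h12] at ht
      have hk0 : (0:ℝ) ≤ (k:ℝ) := Nat.cast_nonneg k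
      linarith [ht.1]
    have hderiv : ∀ t ∈ Set.uIcc ((k:ℝ) + 1) ((k:ℝ) + 2),
        HasDerivAt (Faux c p) (Gaux c p t) t := fun t ht => Faux_deriv hc (hpos t ht)
    have hint : IntervalIntegrable (Gaux c p) MeasureTheory.volume ((k:ℝ) + 1) ((k:ℝ) + 2) := by
      apply ContinuousOn.intervalIntegrable
      apply Gaux_contOn.mono
      rw [Set.uIcc_of_le h12]
      intro t ht
      have h1 : (1:ℝ) ≤ (k:ℝ) + 1 := by
        have : (0:ℝ) ≤ (k:ℝ) := Nat.cast_nonneg k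
        linarith
      exact Set.mem_Ici.mpr (le_trans h1 ht.1)
    have hftc : Faux c p ((k:ℝ) + 2) - Faux c p ((k:ℝ) + 1)
        = ∫ t in ((k:ℝ) + 1)..((k:ℝ) + 2), Gaux c p t :=
      (intervalIntegral.integral_eq_sub_of_hasDerivAt hderiv hint).symm
    have hEeq : E k = ∫ t in ((k:ℝ) + 1)..((k:ℝ) + 2), (Gaux c p t - b k) := by
      rw [hEdef]
      simp only
      rw [hftc, intervalIntegral.integral_sub hint (intervalIntegrable_const),
        intervalIntegral.integral_const, smul_eq_mul]
      ring
    have hb : ∀ t ∈ Set.uIoc ((k:ℝ) + 1) ((k:ℝ) + 2), ‖Gaux c p t - b k‖ ≤ Bnd k := by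
      intro t ht
      rw [Set.uIoc_of_le h12] at ht
      have h1 : (1:ℝ) ≤ (k:ℝ) + 1 := by
        have : (0:ℝ) ≤ (k:ℝ) := Nat.cast_nonneg k
        linarith
      have := keybound hc hp0 hp1 h1 ht.1.le (by linarith [ht.2] : t ≤ (k:ℝ) + 1 + 1)
      rw [hbdef, hBnddef]
      simp only
      rw [Real.norm_eq_abs]
      convert this using 3 <;> ring_nf
    have := intervalIntegral.norm_integral_le_of_norm_le_const hb
    rw [← hEeq] at this
    rw [Real.norm_eq_abs] at this
    have habs : |((k:ℝ) + 2) - ((k:ℝ) + 1)| = 1 := by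
      rw [show ((k:ℝ) + 2) - ((k:ℝ) + 1) = 1 by ring, abs_one]
    rw [habs, mul_one] at this
    exact this
  -- Bnd is summable
  have hBndnn : ∀ k : ℕ, 0 ≤ Bnd k := fun k => (abs_nonneg _).trans (hEbound k)
  have hsum1 : Summable (fun k : ℕ => ((k:ℝ) + 1) ^ (p - 1 : ℝ)) := by
    have h := Real.summable_nat_rpow.mpr (show (p - 1 : ℝ) < -1 by linarith)
    have h2 := (summable_nat_add_iff 1).mpr h
    apply h2.congr
    intro k
    push_cast
    ring_nf
  have hsum2 : Summable (fun k : ℕ => ((k:ℝ) + 1) ^ (p - 1 / 2 : ℝ) - ((k:ℝ) + 2) ^ (p - 1 / 2 : ℝ)) := by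
    set g : ℕ → ℝ := fun k => ((k:ℝ) + 1) ^ (p - 1 / 2 : ℝ) with hgdef
    have hg2 : ∀ k : ℕ, ((k:ℝ) + 2) ^ (p - 1 / 2 : ℝ) = g (k + 1) := by
      intro k; rw [hgdef]; push_cast; ring_nf
    have hnn : ∀ k : ℕ, 0 ≤ g k - g (k + 1) := by
      intro k
      have : g (k + 1) ≤ g k := by
        rw [hgdef]
        apply Real.rpow_le_rpow_of_nonpos (by positivity) (by push_cast; linarith) (by linarith)
      linarith
    have hble : ∀ N : ℕ, ∑ i ∈ Finset.range N, (g i - g (i + 1)) ≤ g 0 := by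
      intro N
      rw [Finset.sum_range_sub' g]
      have : 0 ≤ g N := (Real.rpow_pos_of_pos (by positivity) _).le
      linarith
    have := summable_of_sum_range_le hnn hble
    apply this.congr
    intro k
    rw [hg2 k]
  have hBndsum : Summable Bnd := by
    rw [hBnddef]
    exact (hsum1.mul_left _).add hsum2
  -- E is summable
  have hEsum : Summable E := Summable.of_norm_bounded hBndsum (fun k => by
    rw [Real.norm_eq_abs]; exact hEbound k)
  -- partial sums of b telescope
  have hpartial : ∀ M : ℕ, ∑ k ∈ Finset.range M, b k
      = (Faux c p ((M:ℝ) + 1) - Faux c p 1) - ∑ k ∈ Finset.range M, E k := by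
    intro M
    have htel : ∑ k ∈ Finset.range M, (Faux c p ((k:ℝ) + 2) - Faux c p ((k:ℝ) + 1))
        = Faux c p ((M:ℝ) + 1) - Faux c p 1 := by
      have h := Finset.sum_range_sub (fun k : ℕ => Faux c p ((k:ℝ) + 1)) M
      simp only [Nat.cast_zero, zero_add] at h
      calc ∑ k ∈ Finset.range M, (Faux c p ((k:ℝ) + 2) - Faux c p ((k:ℝ) + 1))
          = ∑ k ∈ Finset.range M, (Faux c p (((k + 1 : ℕ):ℝ) + 1) - Faux c p ((k:ℝ) + 1)) := by
            apply Finset.sum_congr rfl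
            intro k _
            congr 2
            push_cast
            ring
        _ = Faux c p ((M:ℝ) + 1) - Faux c p 1 := h
    calc ∑ k ∈ Finset.range M, b k
        = ∑ k ∈ Finset.range M, ((Faux c p ((k:ℝ) + 2) - Faux c p ((k:ℝ) + 1)) - E k) := by
          apply Finset.sum_congr rfl; intro k _; rw [hEdef]; ring
      _ = (∑ k ∈ Finset.range M, (Faux c p ((k:ℝ) + 2) - Faux c p ((k:ℝ) + 1)))
            - ∑ k ∈ Finset.range M, E k := Finset.sum_sub_distrib _ _
      _ = (Faux c p ((M:ℝ) + 1) - Faux c p 1) - ∑ k ∈ Finset.range M, E k := by rw [htel]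
  -- Faux at infinity tends to 0
  have hF0 : Tendsto (fun M : ℕ => Faux c p ((M:ℝ) + 1)) atTop (nhds 0) := by
    refine squeeze_zero_norm (a := fun M : ℕ => (2 / c) * ((M:ℝ) + 1) ^ p) ?_ ?_
    · intro M
      rw [Real.norm_eq_abs]
      have hM1 : (0:ℝ) < (M:ℝ) + 1 := by positivity
      have hpow : (0:ℝ) ≤ ((M:ℝ) + 1) ^ p := (Real.rpow_pos_of_pos hM1 _).le
      calc |Faux c p ((M:ℝ) + 1)|
          = (2 / c) * |Real.sin (c * Real.sqrt ((M:ℝ) + 1) + π / 4)| * ((M:ℝ) + 1) ^ p := by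
            unfold Faux
            rw [abs_mul, abs_mul, abs_of_nonneg (by positivity : (0:ℝ) ≤ 2 / c),
              abs_of_nonneg hpow]
        _ ≤ (2 / c) * 1 * ((M:ℝ) + 1) ^ p := by
            apply mul_le_mul_of_nonneg_right _ hpow
            apply mul_le_mul_of_nonneg_left (Real.abs_sin_le_one _) (by positivity)
        _ = (2 / c) * ((M:ℝ) + 1) ^ p := by ring
    · have h1 : Tendsto (fun t : ℝ => t ^ p) atTop (nhds 0) := by
        have := tendsto_rpow_neg_atTop (show (0:ℝ) < -p by linarith)
        simpa [neg_neg] using this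
      have h2 : Tendsto (fun M : ℕ => (M:ℝ) + 1) atTop atTop :=
        tendsto_atTop_add_const_right _ 1 tendsto_natCast_atTop_atTop
      have h3 : Tendsto (fun M : ℕ => ((M:ℝ) + 1) ^ p) atTop (nhds 0) := h1.comp h2
      have := h3.const_mul (2 / c)
      simpa [mul_comm] using this
  -- conclude
  refine ⟨(0 - Faux c p 1) - ∑' k, E k, ?_⟩
  have hTb : Tendsto (fun M : ℕ => ∑ k ∈ Finset.range M, b k) atTop
      (nhds ((0 - Faux c p 1) - ∑' k, E k)) := by
    have h1 : Tendsto (fun M : ℕ => Faux c p ((M:ℝ) + 1) - Faux c p 1) atTop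
        (nhds (0 - Faux c p 1)) := hF0.sub_const _
    have h2 : Tendsto (fun M : ℕ => ∑ k ∈ Finset.range M, E k) atTop (nhds (∑' k, E k)) :=
      hEsum.hasSum.tendsto_sum_nat
    have := h1.sub h2
    apply this.congr
    intro M
    exact (hpartial M).symm
  apply hTb.congr
  intro M
  exact (hsum_eq M).symm
end
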